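/- arXiv:1304.2860 — 6 statements merged into one kernel-verified Lean document; each statement's English description precedes it below -/
import Mathlib

section
/- A stack configuration c is poppable if and only if: (1) stack H does not contain the pattern 132, (2) stack V does not contain the pattern 12, and (3) the pair of stacks (V,H) does not contain the pattern |2|13|. -/
/-- The three stack operations: `ρ` (push the next input element onto `H`),
`λ` (move the top of `H` onto the top of `V`), `μ` (pop the top of `V` to the output). -/
inductive Op : Type
  | push : Op
  | lam : Op
  | mu : Op
  deriving DecidableEq

/-- A full machine configuration: remaining input, stack `H`, stack `V`
(both stacks have their top at the head of the list), and the output so far. -/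
structure Conf : Type where
  input : List ℤ
  H : List ℤ
  V : List ℤ
  output : List ℤ
  deriving DecidableEq

/-- One machine step (`none` if the operation is impossible). -/
def stepOp : Op → Conf → Option Conf
  | Op.push, ⟨x :: inp, h, v, out⟩ => some ⟨inp, x :: h, v, out⟩
  | Op.lam, ⟨inp, x :: h, v, out⟩ => some ⟨inp, h, x :: v, out⟩
  | Op.mu, ⟨inp, h, x :: v, out⟩ => some ⟨inp, h, v, out ++ [x]⟩
  | _, _ => none

/-- Run a word of operations from a configuration. -/
def runOps : List Op → Conf → Option Conf
  | [], c => some c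
  | o :: w, c => (stepOp o c).bind (runOps w)

/-- Initial configuration with input `σ`, empty stacks and empty output. -/
def initConf (σ : List ℤ) : Conf := ⟨σ, [], [], []⟩

/-- Number of occurrences of the letter `o` in the word `w`. -/
def countOp (w : List Op) (o : Op) : ℕ := (w.filter (fun o' => decide (o' = o))).length

/-- A stack word: every prefix `v` satisfies `|v|_ρ ≥ |v|_λ ≥ |v|_μ`. -/
def IsStackWord (w : List Op) : Prop :=
  ∀ v : List Op, v <+: w →
    countOp v Op.mu ≤ countOp v Op.lam ∧ countOp v Op.lam ≤ countOp v Op.push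

/-- A sorting word: a stack word with `|w|_ρ = |w|_λ = |w|_μ`. -/
def IsSortingWord (w : List Op) : Prop :=
  IsStackWord w ∧ countOp w Op.push = countOp w Op.lam ∧ countOp w Op.lam = countOp w Op.mu

/-- `w` is a sorting word for `σ`: applied to input `σ` it empties everything
and outputs the elements of `σ` in increasing order. -/
def SortsTo (σ : List ℤ) (w : List Op) : Prop :=
  ∃ out : List ℤ, runOps w (initConf σ) = some ⟨[], [], [], out⟩ ∧
    out.Pairwise (· < ·) ∧ out.Perm σ

/-- `σ` is 2-stack sortable. -/
def Sortable (σ : List ℤ) : Prop := ∃ w : List Op, SortsTo σ w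

/-- A stack configuration `(V, H)`; each list has the top of the stack at its head
(so the bottom-to-top reading is the reverse of the list). -/
structure SConf : Type where
  V : List ℤ
  H : List ℤ
  deriving DecidableEq

/-- The elements of a stack configuration. -/
def SConf.elems (c : SConf) : List ℤ := c.V ++ c.H

/-- A stack configuration is poppable if its elements can all be output in
increasing order using only operations `λ` and `μ`. -/
def Poppable (c : SConf) : Prop :=
  ∃ (w : List Op) (out : List ℤ), Op.push ∉ w ∧
    runOps w ⟨[], c.H, c.V, []⟩ = some ⟨[], [], [], out⟩ ∧ out.Pairwise (· < ·)

/-- `c` is the stack configuration reached after performing `w` with input `σ`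
(i.e. `c = c_σ(w)`). -/
def ReachesConf (σ : List ℤ) (w : List Op) (c : SConf) : Prop :=
  ∃ inp out : List ℤ, runOps w (initConf σ) = some ⟨inp, c.H, c.V, out⟩

/-- A stack configuration is reachable for `σ` if it equals `c_σ(w)` for some stack word `w`. -/
def Reachable (σ : List ℤ) (c : SConf) : Prop :=
  ∃ w : List Op, IsStackWord w ∧ ReachesConf σ w c

/-- A total stack configuration of `σ`: its elements are exactly those of `σ`. -/
def TotalFor (σ : List ℤ) (c : SConf) : Prop := c.elems.Perm σ

/-- A pushall stack configuration of `σ`: poppable, total and reachable for `σ`. -/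
def IsPushall (σ : List ℤ) (c : SConf) : Prop :=
  Poppable c ∧ TotalFor σ c ∧ Reachable σ c

/-- The decorated word of `w` started from a configuration: each letter is labelled
with the element it acts on. -/
def decorate : List Op → Conf → Option (List (Op × ℤ))
  | [], _ => some []
  | Op.push :: w, ⟨x :: inp, h, v, out⟩ =>
      (decorate w ⟨inp, x :: h, v, out⟩).map (fun l => (Op.push, x) :: l)
  | Op.lam :: w, ⟨inp, x :: h, v, out⟩ =>
      (decorate w ⟨inp, h, x :: v, out⟩).map (fun l => (Op.lam, x) :: l)
  | Op.mu :: w, ⟨inp, h, x :: v, out⟩ =>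
      (decorate w ⟨inp, h, v, out ++ [x]⟩).map (fun l => (Op.mu, x) :: l)
  | _ :: _, _ => none

/-- The restriction `w_{|I}` of a decorated word: keep exactly the letters acting
on elements of `I`, then forget the labels. -/
def restrictWord (dw : List (Op × ℤ)) (I : Finset ℤ) : List Op :=
  (dw.filter (fun p => decide (p.2 ∈ I))).map Prod.fst

/-- `Bs` is a decomposition of `τ` into (nonempty, contiguous) blocks whose values
decrease from one block to the next. -/
def IsDecBlocks (τ : List ℤ) (Bs : List (List ℤ)) : Prop :=
  τ = Bs.flatten ∧ (∀ B ∈ Bs, B ≠ []) ∧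
    Bs.Pairwise (fun B B' => ∀ x ∈ B, ∀ y ∈ B', y < x)

/-- `τ` is `⊖`-indecomposable. -/
def MinusIndecomposable (τ : List ℤ) : Prop :=
  τ ≠ [] ∧ ∀ Bs : List (List ℤ), IsDecBlocks τ Bs → Bs.length ≤ 1

/-- `Bs` is the `⊖`-decomposition of `τ`: a decomposition into decreasing blocks,
each of which is `⊖`-indecomposable. -/
def IsMinusDecomposition (τ : List ℤ) (Bs : List (List ℤ)) : Prop :=
  IsDecBlocks τ Bs ∧ ∀ B ∈ Bs, MinusIndecomposable B

/-- `k` (0-based) is the position of a right-to-left minimum of `σ`: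
no later entry is smaller. -/
def IsRTLMinPos (σ : List ℤ) (k : ℕ) : Prop :=
  k < σ.length ∧ ∀ j, j < σ.length → k < j → ¬ (σ.getD j 0 < σ.getD k 0)

instance (σ : List ℤ) : DecidablePred (IsRTLMinPos σ) := fun k => by
  unfold IsRTLMinPos; infer_instance

/-- The (increasing) list of positions of the right-to-left minima of `σ`. -/
def rtlPositions (σ : List ℤ) : List ℕ :=
  (List.range σ.length).filter (fun k => decide (IsRTLMinPos σ k))

/-- The number `r` of right-to-left minima of `σ`. -/
def rtlCount (σ : List ℤ) : ℕ := (rtlPositions σ).length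

/-- The 0-based position `k_i` of the `i`-th right-to-left minimum of `σ` (`i` is 1-based). -/
def rtlPos (σ : List ℤ) (i : ℕ) : ℕ := (rtlPositions σ).getD (i - 1) 0

/-- `σ^{(i)}`: the elements `σ_j` with `j < k_i` and `σ_j > σ_{k_i}`, in the order of `σ`. -/
def sigmaUp (σ : List ℤ) (i : ℕ) : List ℤ :=
  (σ.take (rtlPos σ i)).filter (fun x => decide (σ.getD (rtlPos σ i) 0 < x))

/-- `A^{(i)}`: the elements `σ_j` with `j < k_i` and `σ_j > σ_{k_{i+1}}`, in the order of `σ`. -/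
def commonA (σ : List ℤ) (i : ℕ) : List ℤ :=
  (σ.take (rtlPos σ i)).filter (fun x => decide (σ.getD (rtlPos σ (i + 1)) 0 < x))

/-- The letter `u` occurs (strictly) before the letter `v` in the decorated word `dw`. -/
def Before (dw : List (Op × ℤ)) (u v : Op × ℤ) : Prop :=
  ∃ d1 d2 d3 : List (Op × ℤ), dw = d1 ++ u :: d2 ++ v :: d3

/-- The decorated word `dw` (of a sorting word of `σ`) satisfies property `(P_i)`
(`i` is 1-based). -/
def SatisfiesP (σ : List ℤ) (dw : List (Op × ℤ)) (i : ℕ) : Prop :=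
  (∃ d1 d2 : List (Op × ℤ),
      dw = d1 ++ (Op.push, σ.getD (rtlPos σ i) 0) :: (Op.lam, σ.getD (rtlPos σ i) 0)
        :: (Op.mu, σ.getD (rtlPos σ i) 0) :: d2) ∧
  (∀ x ∈ σ, x < σ.getD (rtlPos σ i) 0 →
      Before dw (Op.mu, x) (Op.push, σ.getD (rtlPos σ i) 0)) ∧
  (i < rtlCount σ →
    ∀ (Bs : List (List ℤ)) (p : ℕ) (m : ℤ),
      IsMinusDecomposition (sigmaUp σ i) Bs →
      m ∈ commonA σ i → (∀ y ∈ commonA σ i, m ≤ y) →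
      p < Bs.length → m ∈ Bs.getD p [] →
      ∀ (x : ℤ) (j : ℕ), p < j → j < Bs.length → x ∈ Bs.getD j [] →
        Before dw (Op.mu, x) (Op.push, σ.getD (rtlPos σ i + 1) 0))

/-- An extended stack configuration `(c, i)` of `σ`: here `i` is the number of input
elements already consumed (the paper's index minus one), `c` is poppable and consists
of all elements among the first `i` ones that are greater than some value `p`. -/
def IsExtConf (σ : List ℤ) (c : SConf) (i : ℕ) : Prop :=
  i ≤ σ.length ∧ Poppable c ∧ c.elems.Nodup ∧
    ∃ p : ℤ, ∀ x : ℤ, x ∈ c.elems ↔ (x ∈ σ.take i ∧ p < x)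

/-- `(c', j)` is accessible from `(c, i)` for `σ`: starting from stacks `c` with input
`σ_{i+1} … σ_n` remaining, some sequence of operations reaches stacks `c'` with input
`σ_{j+1} … σ_n` remaining, the `μ` operations outputting elements in increasing order. -/
def AccessibleFrom (σ : List ℤ) (c : SConf) (i : ℕ) (c' : SConf) (j : ℕ) : Prop :=
  ∃ (w : List Op) (out : List ℤ),
    runOps w ⟨σ.drop i, c.H, c.V, []⟩ = some ⟨σ.drop j, c'.H, c'.V, out⟩ ∧
    out.Pairwise (· < ·)

/-- A `P_i`-stack configuration of `σ`: a configuration `c_{σ_{≤k_i}}(w)` such that for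
some word `u` whose first letter is the push of `σ_{k_i}`, `w ++ u` is a sorting word of
`σ_{≤k_i}` satisfying `(P_ℓ)` for all `ℓ` from 1 to `i`. -/
def PiConfig (σ : List ℤ) (i : ℕ) (c : SConf) : Prop :=
  ∃ (w u : List Op) (dw : List (Op × ℤ)),
    u.head? = some Op.push ∧
    countOp w Op.push = rtlPos σ i ∧
    ReachesConf (σ.take (rtlPos σ i + 1)) w c ∧
    SortsTo (σ.take (rtlPos σ i + 1)) (w ++ u) ∧
    decorate (w ++ u) (initConf (σ.take (rtlPos σ i + 1))) = some dw ∧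
    ∀ l, 1 ≤ l → l ≤ i → SatisfiesP (σ.take (rtlPos σ i + 1)) dw l

/-- The restriction `c_{|I}` of a stack configuration to the elements of `I`. -/
def restrictConf (c : SConf) (I : List ℤ) : SConf :=
  ⟨c.V.filter (fun x => decide (x ∈ I)), c.H.filter (fun x => decide (x ∈ I))⟩

/-- The restriction `σ_{|I}` of a list to the elements of `I`. -/
def restrictList (τ I : List ℤ) : List ℤ := τ.filter (fun x => decide (x ∈ I))

/-- Stack `H` (top at head, i.e. bottom-to-top is the reverse) contains the pattern `132`. -/
def HasPattern132 (H : List ℤ) : Prop :=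
  ∃ x y z : ℤ, List.Sublist [x, y, z] H.reverse ∧ x < z ∧ z < y

/-- Stack `V` contains the pattern `12` (bottom to top). -/
def HasPattern12 (V : List ℤ) : Prop :=
  ∃ x y : ℤ, List.Sublist [x, y] V.reverse ∧ x < y

/-- The stacks `(V,H)` contain the pattern `|2|13|`: an element `i` of `V` and elements
`j, k` of `H`, with `j` below `k` in `H`, such that `j < i < k`. -/
def HasPattern2_13 (c : SConf) : Prop :=
  ∃ i ∈ c.V, ∃ j k : ℤ, List.Sublist [j, k] c.H.reverse ∧ j < i ∧ i < k

/-- `y` occurs (strictly) above `x` in the stack `L` (top of stack at the head). -/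
def AboveIn (L : List ℤ) (y x : ℤ) : Prop :=
  ∃ (a b : ℕ) (ha : a < L.length) (hb : b < L.length),
    a < b ∧ L.get ⟨a, ha⟩ = y ∧ L.get ⟨b, hb⟩ = x

/-- The increasing list of integers `i, i+1, …, j`. -/
def intRange (i j : ℤ) : List ℤ := (List.range (j + 1 - i).toNat).map (fun t => i + t)

/-- The decreasing permutation `n (n-1) … 2 1`. -/
def decPerm (n : ℕ) : List ℤ := (List.range n).map (fun t => (n - t : ℤ))

section Aux

private lemma listMinEx (l : List ℤ) (h : l ≠ []) : ∃ a ∈ l, ∀ b ∈ l, a ≤ b := by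
  induction l with
  | nil => exact absurd rfl h
  | cons x t ih =>
    rcases t.eq_nil_or_concat with rfl | hne
    · exact ⟨x, by simp, by simp⟩
    · have ht : t ≠ [] := by rintro rfl; rcases hne with ⟨_, _, h⟩; simp at h
      obtain ⟨a, ha, hmin⟩ := ih ht
      rcases le_total x a with hx | hx
      · exact ⟨x, by simp, by
          rintro b hb
          rcases List.mem_cons.1 hb with rfl | hb
          · exact le_refl _
          · exact hx.trans (hmin b hb)⟩
      · exact ⟨a, List.mem_cons_of_mem _ ha, by
          rintro b hb
          rcases List.mem_cons.1 hb with rfl | hb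
          · exact hx
          · exact hmin b hb⟩

private lemma pair_sublist_append {x y : ℤ} {L1 L2 : List ℤ}
    (h : List.Sublist [x, y] (L1 ++ L2)) :
    List.Sublist [x, y] L1 ∨ (x ∈ L1 ∧ y ∈ L2) ∨ List.Sublist [x, y] L2 := by
  rw [List.sublist_append_iff] at h
  obtain ⟨l1, l2, heq, h1, h2⟩ := h
  rcases l1 with _ | ⟨a, _ | ⟨b, _ | ⟨c, t⟩⟩⟩
  · right; right; simp only [List.nil_append] at heq; rwa [← heq] at h2
  · simp only [List.cons_append, List.nil_append, List.cons.injEq] at heq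
    obtain ⟨rfl, heq⟩ := heq
    right; left
    exact ⟨(List.singleton_sublist.1 h1), (List.singleton_sublist.1 (heq ▸ h2))⟩
  · simp only [List.cons_append, List.cons.injEq] at heq
    obtain ⟨rfl, rfl, heq⟩ := heq
    left
    have : l2 = [] := by simpa using heq.symm
    subst this
    exact h1
  · exfalso
    have := congrArg List.length heq
    simp only [List.length_append, List.length_cons, List.length_nil] at this; omega

private lemma runOps_append (w1 w2 : List Op) (c : Conf) :
    runOps (w1 ++ w2) c = (runOps w1 c).bind (runOps w2) := by
  induction w1 generalizing c with
  | nil => simp [runOps]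
  | cons o w ih =>
    simp only [List.cons_append, runOps]
    cases stepOp o c with
    | none => simp
    | some c' => simp [ih]

private lemma run_lams (A : List ℤ) : ∀ (H V out : List ℤ),
    runOps (List.replicate A.length Op.lam) ⟨[], A ++ H, V, out⟩ =
      some ⟨[], H, A.reverse ++ V, out⟩ := by
  induction A with
  | nil => intro H V out; simp [runOps]
  | cons a A ih =>
    intro H V out
    simp only [List.length_cons, List.replicate_succ, runOps, List.cons_append, stepOp,
      Option.bind_eq_bind, Option.bind_some]
    rw [ih H (a :: V) out]
    simp

end Aux

private lemma fwd : ∀ (w : List Op) (H V out out' : List ℤ),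
    runOps w ⟨[], H, V, out⟩ = some ⟨[], [], [], out'⟩ → out'.Pairwise (· < ·) →
    out.Pairwise (· < ·) ∧ (∀ a ∈ out, ∀ b ∈ H ++ V, a < b) ∧
      ¬ HasPattern132 H ∧ ¬ HasPattern12 V ∧ ¬ HasPattern2_13 ⟨V, H⟩ := by
  intro w
  induction w with
  | nil =>
    intro H V out out' hrun hs
    simp only [runOps, Option.some.injEq, Conf.mk.injEq] at hrun
    obtain ⟨-, rfl, rfl, rfl⟩ := hrun
    refine ⟨hs, by simp, ?_, ?_, ?_⟩
    · rintro ⟨x, y, z, hsub, -⟩; simp [List.sublist_nil] at hsub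
    · rintro ⟨x, y, hsub, -⟩; simp [List.sublist_nil] at hsub
    · rintro ⟨i, hi, -⟩; simp at hi
  | cons o w ih =>
    intro H V out out' hrun hs
    cases o with
    | push => simp [runOps, stepOp] at hrun
    | lam =>
      cases H with
      | nil => simp [runOps, stepOp] at hrun
      | cons h H' =>
        simp only [runOps, stepOp, Option.bind_eq_bind, Option.bind_some] at hrun
        obtain ⟨hout, hord, h132, h12, h213⟩ := ih H' (h :: V) out out' hrun hs
        refine ⟨hout, ?_, ?_, ?_, ?_⟩
        · intro a ha b hb
          apply hord a ha
          simp only [List.mem_append, List.mem_cons] at hb ⊢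
          tauto
        · rintro ⟨x, y, z, hsub, hxz, hzy⟩
          simp only [List.reverse_cons] at hsub
          rw [List.sublist_append_iff] at hsub
          obtain ⟨l1, l2, heq, h1, h2⟩ := hsub
          rcases List.sublist_singleton.1 h2 with rfl | rfl
          · simp only [List.append_nil] at heq; subst heq
            exact h132 ⟨x, y, z, h1, hxz, hzy⟩
          · have : l1 = [x, y] ∧ z = h := by
              have := heq
              rcases l1 with _ | ⟨a, _ | ⟨b, _ | ⟨c, t⟩⟩⟩ <;> simp_all
            obtain ⟨rfl, rfl⟩ := this
            exact h213 ⟨z, by simp, x, y, h1, hxz, hzy⟩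
        · rintro ⟨x, y, hsub, hxy⟩
          exact h12 ⟨x, y, by
            simp only [List.reverse_cons]
            exact hsub.trans (List.sublist_append_left _ _), hxy⟩
        · rintro ⟨i, hi, j, k, hsub, hji, hik⟩
          simp only [List.reverse_cons] at hsub
          rcases pair_sublist_append hsub with hjk | ⟨hj, hk⟩ | hjk
          · exact h213 ⟨i, List.mem_cons_of_mem _ hi, j, k, hjk, hji, hik⟩
          · simp only [List.mem_singleton] at hk; subst hk
            exact h12 ⟨i, k, by
              simp only [List.reverse_cons]
              exact List.Sublist.append (List.singleton_sublist.2 (by simpa using hi))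
                (List.Sublist.refl _), hik⟩
          · simp only [List.sublist_singleton] at hjk; simp at hjk
    | mu =>
      cases V with
      | nil => simp [runOps, stepOp] at hrun
      | cons v V' =>
        simp only [runOps, stepOp, Option.bind_eq_bind, Option.bind_some] at hrun
        obtain ⟨hout, hord, h132, h12, h213⟩ := ih H V' (out ++ [v]) out' hrun hs
        have houtv : ∀ a ∈ out, a < v := by
          intro a ha
          have := (List.pairwise_append.1 hout).2.2
          exact this a ha v (by simp)
        refine ⟨hout.sublist (List.sublist_append_left _ _), ?_, h132, ?_, ?_⟩
        · intro a ha b hb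
          simp only [List.mem_append, List.mem_cons] at hb
          rcases hb with hb | rfl | hb
          · exact hord a (by simp [ha]) b (by simp [hb])
          · exact houtv a ha
          · exact hord a (by simp [ha]) b (by simp [hb])
        · rintro ⟨x, y, hsub, hxy⟩
          simp only [List.reverse_cons] at hsub
          rcases pair_sublist_append hsub with hxy' | ⟨hx, hy⟩ | hxy'
          · exact h12 ⟨x, y, hxy', hxy⟩
          · simp only [List.mem_singleton] at hy; subst hy
            have : y < x := hord y (by simp) x (List.mem_append.2 (Or.inr (by simpa using hx)))
            omega
          · simp only [List.sublist_singleton] at hxy'; simp at hxy'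
        · rintro ⟨i, hi, j, k, hsub, hji, hik⟩
          simp only [List.mem_cons] at hi
          rcases hi with rfl | hi
          · have hjH : j ∈ H := by
              have : j ∈ H.reverse := hsub.subset (by simp)
              simpa using this
            have : i < j := hord i (by simp) j (by simp [hjH])
            omega
          · exact h213 ⟨i, hi, j, k, hsub, hji, hik⟩

private lemma key : ∀ (n : ℕ) (H V out : List ℤ), (H ++ V).length ≤ n →
    (H ++ V).Nodup → out.Pairwise (· < ·) → (∀ a ∈ out, ∀ b ∈ H ++ V, a < b) →
    ¬ HasPattern132 H → ¬ HasPattern12 V → ¬ HasPattern2_13 ⟨V, H⟩ →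
    ∃ w out', Op.push ∉ w ∧ runOps w ⟨[], H, V, out⟩ = some ⟨[], [], [], out'⟩ ∧
      out'.Pairwise (· < ·) := by
  intro n
  induction n with
  | zero =>
    intro H V out hlen _ hout _ _ _ _
    simp only [List.length_append, Nat.le_zero, Nat.add_eq_zero] at hlen
    obtain rfl := List.length_eq_zero_iff.1 hlen.1
    obtain rfl := List.length_eq_zero_iff.1 hlen.2
    exact ⟨[], out, by simp, by simp [runOps], hout⟩
  | succ n ih =>
    intro H V out hlen hnd hout hord h132 h12 h213
    rcases eq_or_ne (H ++ V) [] with hemp | hne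
    · obtain ⟨rfl, rfl⟩ := List.append_eq_nil_iff.1 hemp
      exact ⟨[], out, by simp, by simp [runOps], hout⟩
    · obtain ⟨m, hm, hmin⟩ := listMinEx (H ++ V) hne
      have hlt : ∀ b ∈ H ++ V, b ≠ m → m < b := fun b hb hbne =>
        lt_of_le_of_ne (hmin b hb) (Ne.symm hbne)
      rcases List.mem_append.1 hm with hmH | hmV
      · -- m is in H
        obtain ⟨A, B, rfl⟩ := List.append_of_mem hmH
        have hnd' : (A ++ (m :: (B ++ V))).Nodup := by
          simpa [List.append_assoc] using hnd
        have hmA : m ∉ A := by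
          rcases List.nodup_append.1 hnd' with ⟨-, -, hdisj⟩
          intro hc; exact hdisj m hc m (by simp) rfl
        have hmBV : m ∉ B ++ V := by
          rcases List.nodup_append.1 hnd' with ⟨-, hn, -⟩
          exact (List.nodup_cons.1 hn).1
        have hmB : m ∉ B := fun hc => hmBV (by simp [hc])
        have hmV : m ∉ V := fun hc => hmBV (by simp [hc])
        have hltm : ∀ b, (b ∈ A ∨ b ∈ B ∨ b ∈ V) → m < b := by
          intro b hb
          refine hlt b (by simp; tauto) ?_
          rintro rfl
          rcases hb with h | h | h
          · exact hmA h
          · exact hmB h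
          · exact hmV h
        have hHrev : (A ++ m :: B).reverse = B.reverse ++ m :: A.reverse := by simp
        -- conditions for the smaller configuration (B, A.reverse ++ V, out ++ [m])
        have hlen' : (B ++ (A.reverse ++ V)).length ≤ n := by
          simp only [List.length_append, List.length_cons, List.length_reverse] at hlen ⊢
          omega
        have hnd2 : (B ++ (A.reverse ++ V)).Nodup := by
          have h1 : (A ++ (B ++ V)).Nodup := by
            have := (List.perm_middle (l₁ := A) (l₂ := B ++ V) (a := m)).nodup hnd'
            exact (List.nodup_cons.1 this).2
          have hperm : (B ++ (A.reverse ++ V)).Perm (A ++ (B ++ V)) := by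
            have p1 : (B ++ (A.reverse ++ V)).Perm (B ++ (A ++ V)) :=
              List.Perm.append_left B ((A.reverse_perm).append_right V)
            have p2 : (B ++ (A ++ V)).Perm (A ++ (B ++ V)) := by
              rw [← List.append_assoc, ← List.append_assoc]
              exact (List.perm_append_comm).append_right V
            exact p1.trans p2
          exact hperm.symm.nodup h1
        have hout2 : (out ++ [m]).Pairwise (· < ·) := by
          refine List.pairwise_append.2 ⟨hout, by simp, ?_⟩
          intro a ha b hb
          simp only [List.mem_singleton] at hb
          have := hord a ha m hm
          omega
        have hord2 : ∀ a ∈ out ++ [m], ∀ b ∈ B ++ (A.reverse ++ V), a < b := by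
          intro a ha b hb
          have hb' : b ∈ A ∨ b ∈ B ∨ b ∈ V := by
            simp only [List.mem_append, List.mem_reverse] at hb; tauto
          rcases List.mem_append.1 ha with ha | ha
          · exact hord a ha b (by simp; tauto)
          · simp only [List.mem_singleton] at ha; subst ha
            exact hltm b hb'
        have h132' : ¬ HasPattern132 B := by
          rintro ⟨x, y, z, hsub, hxz, hzy⟩
          refine h132 ⟨x, y, z, ?_, hxz, hzy⟩
          rw [hHrev]
          exact hsub.trans (List.sublist_append_left _ _)
        have h12' : ¬ HasPattern12 (A.reverse ++ V) := by
          rintro ⟨x, y, hsub, hxy⟩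
          rw [List.reverse_append, List.reverse_reverse] at hsub
          rcases pair_sublist_append hsub with hs | ⟨hx, hy⟩ | hs
          · exact h12 ⟨x, y, hs, hxy⟩
          · refine h213 ⟨x, by simpa using hx, m, y, ?_, ?_, hxy⟩
            · rw [hHrev]
              refine List.Sublist.trans ?_ (List.sublist_append_right _ _)
              exact List.cons_sublist_cons.2 (List.singleton_sublist.2 (by simpa using hy))
            · exact hltm x (Or.inr (Or.inr (by simpa using hx)))
          · refine h132 ⟨m, y, x, ?_, hltm x (Or.inl (hs.subset (by simp))), hxy⟩
            rw [hHrev]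
            refine List.Sublist.trans ?_ (List.sublist_append_right _ _)
            exact List.cons_sublist_cons.2 (by simpa using hs.reverse)
        have h213' : ¬ HasPattern2_13 ⟨A.reverse ++ V, B⟩ := by
          rintro ⟨i, hi, j, k, hsub, hji, hik⟩
          simp only [List.mem_append, List.mem_reverse] at hi
          rcases hi with hi | hi
          · refine h132 ⟨j, k, i, ?_, hji, hik⟩
            rw [hHrev]
            have : List.Sublist ([j, k] ++ [i]) (B.reverse ++ m :: A.reverse) :=
              List.Sublist.append hsub
                ((List.singleton_sublist.2 (by simpa using hi)).trans
                  (List.sublist_cons_self _ _))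
            simpa using this
          · refine h213 ⟨i, hi, j, k, ?_, hji, hik⟩
            rw [hHrev]
            exact hsub.trans (List.sublist_append_left _ _)
        obtain ⟨w', out', hp', hr', hs'⟩ :=
          ih B (A.reverse ++ V) (out ++ [m]) hlen' hnd2 hout2 hord2 h132' h12' h213'
        refine ⟨List.replicate A.length Op.lam ++ (Op.lam :: Op.mu :: w'), out', ?_, ?_, hs'⟩
        · simp only [List.mem_append, List.mem_replicate, List.mem_cons]
          rintro (⟨-, h⟩ | h | h | h) <;> first | exact Op.noConfusion h | exact hp' h
        · rw [runOps_append, run_lams A (m :: B) V out]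
          simpa [runOps, stepOp] using hr'
      · -- m is in V
        have hVm : ∃ V', V = m :: V' := by
          cases V with
          | nil => simp at hmV
          | cons v V' =>
            rcases List.mem_cons.1 hmV with rfl | hm'
            · exact ⟨V', rfl⟩
            · exfalso
              refine h12 ⟨m, v, ?_, ?_⟩
              · show List.Sublist ([m] ++ [v]) (v :: V').reverse
                rw [List.reverse_cons]
                exact List.Sublist.append (List.singleton_sublist.2 (by simpa using hm'))
                  (List.Sublist.refl _)
              · refine hlt v (by simp) ?_
                rintro rfl
                have := List.nodup_append.1 hnd
                exact (List.nodup_cons.1 this.2.1).1 hm'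
        obtain ⟨V', rfl⟩ := hVm
        have hmH' : m ∉ H := by
          have := (List.nodup_append.1 hnd).2.2
          intro hc; exact this m hc m (by simp) rfl
        have hmV' : m ∉ V' := by
          have := (List.nodup_append.1 hnd).2.1
          exact (List.nodup_cons.1 this).1
        have hlen' : (H ++ V').length ≤ n := by
          simp only [List.length_append, List.length_cons] at hlen ⊢; omega
        have hnd2 : (H ++ V').Nodup := by
          refine List.Nodup.sublist ?_ hnd
          exact List.Sublist.append_left (List.sublist_cons_self m V') H
        have hout2 : (out ++ [m]).Pairwise (· < ·) := by
          refine List.pairwise_append.2 ⟨hout, by simp, ?_⟩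
          intro a ha b hb
          simp only [List.mem_singleton] at hb
          have := hord a ha m hm
          omega
        have hord2 : ∀ a ∈ out ++ [m], ∀ b ∈ H ++ V', a < b := by
          intro a ha b hb
          rcases List.mem_append.1 ha with ha | ha
          · refine hord a ha b ?_
            rcases List.mem_append.1 hb with h | h
            · simp [h]
            · simp [h]
          · simp only [List.mem_singleton] at ha; subst ha
            refine hlt b ?_ ?_
            · rcases List.mem_append.1 hb with h | h
              · simp [h]
              · simp [h]
            · rintro rfl
              rcases List.mem_append.1 hb with h | h
              · exact hmH' h
              · exact hmV' h
        have h12' : ¬ HasPattern12 V' := by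
          rintro ⟨x, y, hsub, hxy⟩
          refine h12 ⟨x, y, ?_, hxy⟩
          rw [List.reverse_cons]
          exact hsub.trans (List.sublist_append_left _ _)
        have h213' : ¬ HasPattern2_13 ⟨V', H⟩ := by
          rintro ⟨i, hi, j, k, hsub, hji, hik⟩
          exact h213 ⟨i, List.mem_cons_of_mem _ hi, j, k, hsub, hji, hik⟩
        obtain ⟨w', out', hp', hr', hs'⟩ :=
          ih H V' (out ++ [m]) hlen' hnd2 hout2 hord2 h132 h12' h213'
        refine ⟨Op.mu :: w', out', ?_, ?_, hs'⟩
        · simp only [List.mem_cons]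
          rintro (h | h)
          · exact Op.noConfusion h
          · exact hp' h
        · simpa [runOps, stepOp] using hr'


/-- A stack configuration `c` (with distinct elements) is poppable if and only if
`H` avoids the pattern 132, `V` avoids the pattern 12, and `(V,H)` avoids `|2|13|`. -/
theorem poppable_iff_patterns (c : SConf) (hnd : c.elems.Nodup) :
    Poppable c ↔ ¬ HasPattern132 c.H ∧ ¬ HasPattern12 c.V ∧ ¬ HasPattern2_13 c := by
  obtain ⟨V, H⟩ := c
  constructor
  · rintro ⟨w, out, -, hrun, hs⟩
    obtain ⟨-, -, h1, h2, h3⟩ := fwd w H V [] out hrun hs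
    exact ⟨h1, h2, h3⟩
  · rintro ⟨h1, h2, h3⟩
    have hnd' : (H ++ V).Nodup := List.nodup_append_comm.1 (by simpa [SConf.elems] using hnd)
    obtain ⟨w, out', hp, hr, hs⟩ := key (H ++ V).length H V [] le_rfl hnd'
      (by simp) (by simp) h1 h2 h3
    exact ⟨w, out', hp, hr, hs⟩
end

section
/- If a stack configuration c is poppable, then there is exactly one sequence of operations λ and μ that outputs all elements of c in increasing order. -/
lemma runA : ∀ (w : List Op) (h v o out : List ℤ), Op.push ∉ w →
    runOps w ⟨[], h, v, o⟩ = some ⟨[], [], [], out⟩ →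
    ∃ o', out = o ++ o' ∧ v.Sublist o' := by
  intro w
  induction w with
  | nil =>
    intro h v o out _ hr
    simp [runOps] at hr
    exact ⟨[], by simp [hr.2.2], by simp [hr.2.1]⟩
  | cons a t ih =>
    intro h v o out hp hr
    match a with
    | Op.push => exact absurd (List.mem_cons_self) hp
    | Op.lam =>
      match h with
      | [] => simp [runOps, stepOp] at hr
      | y :: h' =>
        simp only [runOps, stepOp, Option.bind_some, List.nil_append] at hr
        obtain ⟨o', ho, hs⟩ := ih h' (y :: v) o out (fun m => hp (List.mem_cons_of_mem _ m)) hr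
        exact ⟨o', ho, List.sublist_of_cons_sublist hs⟩
    | Op.mu =>
      match v with
      | [] => simp [runOps, stepOp] at hr
      | x :: v' =>
        simp only [runOps, stepOp, Option.bind_some, List.nil_append] at hr
        obtain ⟨o', ho, hs⟩ := ih h v' (o ++ [x]) out (fun m => hp (List.mem_cons_of_mem _ m)) hr
        exact ⟨x :: o', by simp [ho], hs.cons₂ x⟩

lemma runPerm : ∀ (w : List Op) (h v o out : List ℤ), Op.push ∉ w →
    runOps w ⟨[], h, v, o⟩ = some ⟨[], [], [], out⟩ →
    (o ++ v ++ h).Perm out := by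
  intro w
  induction w with
  | nil =>
    intro h v o out _ hr
    simp [runOps] at hr
    simp [hr.1, hr.2.1, hr.2.2]
  | cons a t ih =>
    intro h v o out hp hr
    match a with
    | Op.push => exact absurd (List.mem_cons_self) hp
    | Op.lam =>
      match h with
      | [] => simp [runOps, stepOp] at hr
      | y :: h' =>
        simp only [runOps, stepOp, Option.bind_some, List.nil_append] at hr
        have := ih h' (y :: v) o out (fun m => hp (List.mem_cons_of_mem _ m)) hr
        refine List.Perm.trans ?_ this
        simp only [List.append_assoc]
        exact List.Perm.append_left o List.perm_middle
    | Op.mu =>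
      match v with
      | [] => simp [runOps, stepOp] at hr
      | x :: v' =>
        simp only [runOps, stepOp, Option.bind_some, List.nil_append] at hr
        have := ih h v' (o ++ [x]) out (fun m => hp (List.mem_cons_of_mem _ m)) hr
        simpa [List.append_assoc] using this


lemma runShift : ∀ (w : List Op) (inp h v o : List ℤ),
    runOps w ⟨inp, h, v, o⟩ =
      (runOps w ⟨inp, h, v, []⟩).map (fun c => ⟨c.input, c.H, c.V, o ++ c.output⟩) := by
  intro w
  induction w with
  | nil => intro inp h v o; simp [runOps]
  | cons a t ih =>
    intro inp h v o
    match a with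
    | Op.push =>
      match inp with
      | [] => simp [runOps, stepOp]
      | x :: inp' => simp only [runOps, stepOp, Option.bind_some, List.nil_append]; exact ih inp' (x :: h) v o
    | Op.lam =>
      match h with
      | [] => simp [runOps, stepOp]
      | y :: h' => simp only [runOps, stepOp, Option.bind_some, List.nil_append]; exact ih inp h' (y :: v) o
    | Op.mu =>
      match v with
      | [] => simp [runOps, stepOp]
      | x :: v' =>
        simp only [runOps, stepOp, Option.bind_some, List.nil_append]
        rw [ih inp h v' (o ++ [x]), ih inp h v' [x]]
        cases runOps t ⟨inp, h, v', []⟩ <;> simp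

lemma uniqPop : ∀ (w1 w2 : List Op) (h v out1 out2 : List ℤ),
    (v ++ h).Nodup → Op.push ∉ w1 → Op.push ∉ w2 →
    runOps w1 ⟨[], h, v, []⟩ = some ⟨[], [], [], out1⟩ → out1.Pairwise (· < ·) →
    runOps w2 ⟨[], h, v, []⟩ = some ⟨[], [], [], out2⟩ → out2.Pairwise (· < ·) →
    w1 = w2 := by
  intro w1
  induction w1 with
  | nil =>
    intro w2 h v out1 out2 hnd hp1 hp2 hr1 hs1 hr2 hs2
    simp [runOps] at hr1
    obtain ⟨hh, hv, _⟩ := hr1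
    subst hh; subst hv
    match w2 with
    | [] => rfl
    | a :: t =>
      match a with
      | Op.push => exact absurd (List.mem_cons_self) hp2
      | Op.lam => simp [runOps, stepOp] at hr2
      | Op.mu => simp [runOps, stepOp] at hr2
  | cons a1 t1 ih =>
    intro w2 h v out1 out2 hnd hp1 hp2 hr1 hs1 hr2 hs2
    -- w2 must be nonempty
    match w2 with
    | [] =>
      simp [runOps] at hr2
      obtain ⟨hh, hv, _⟩ := hr2
      subst hh; subst hv
      match a1 with
      | Op.push => exact absurd (List.mem_cons_self) hp1
      | Op.lam => simp [runOps, stepOp] at hr1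
      | Op.mu => simp [runOps, stepOp] at hr1
    | a2 :: t2 =>
      have hp1' : Op.push ∉ t1 := fun m => hp1 (List.mem_cons_of_mem _ m)
      have hp2' : Op.push ∉ t2 := fun m => hp2 (List.mem_cons_of_mem _ m)
      -- forced move lemma, applied to each word
      have forced : ∀ (a : Op) (t : List Op) (out : List ℤ), Op.push ∉ t →
          runOps (a :: t) ⟨[], h, v, []⟩ = some ⟨[], [], [], out⟩ → out.Pairwise (· < ·) →
          (a = Op.mu ↔ ∃ x v', v = x :: v' ∧ ∀ z ∈ v' ++ h, x < z) := by
        intro a t out hpt hr hs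
        constructor
        · rintro rfl
          match v with
          | [] => simp [runOps, stepOp] at hr
          | x :: v' =>
            refine ⟨x, v', rfl, ?_⟩
            simp only [runOps, stepOp, Option.bind_some, List.nil_append] at hr
            obtain ⟨o', ho, _⟩ := runA t h v' [x] out hpt hr
            have hperm := runPerm t h v' [x] out hpt hr
            intro z hz
            have hzout : z ∈ out := hperm.mem_iff.mp (by simp [hz])
            rw [ho] at hzout hs
            simp only [List.singleton_append] at hzout hs
            rcases List.mem_cons.mp hzout with h1 | h1
            · exfalso
              have hx : x ∉ v' ++ h := by
                have := hnd
                rw [show (x :: v') ++ h = x :: (v' ++ h) by simp] at this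
                exact (List.nodup_cons.mp this).1
              exact hx (h1 ▸ hz)
            · exact List.rel_of_pairwise_cons hs h1
        · rintro ⟨x, v', rfl, hmin⟩
          match a with
          | Op.push => simp [runOps, stepOp] at hr
          | Op.mu => rfl
          | Op.lam =>
            exfalso
            match h with
            | [] => simp [runOps, stepOp] at hr
            | y :: h' =>
              simp only [runOps, stepOp, Option.bind_some, List.nil_append] at hr
              obtain ⟨o', ho, hsub⟩ := runA t h' (y :: x :: v') [] out hpt hr
              have hyx : List.Sublist [y, x] out := by
                rw [ho]; simp only [List.nil_append]
                exact List.Sublist.trans (by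
                  have : List.Sublist [y, x] (y :: x :: v') := by
                    refine List.Sublist.cons₂ y (List.Sublist.cons₂ x (List.nil_sublist v'))
                  exact this) hsub
              have : List.Pairwise (· < ·) [y, x] := hs.sublist hyx
              have hylt : y < x := List.rel_of_pairwise_cons this (by simp)
              exact absurd hylt (lt_asymm (hmin y (by simp)))
      have h1 := forced a1 t1 out1 hp1' hr1 hs1
      have h2 := forced a2 t2 out2 hp2' hr2 hs2
      have ha : a1 = a2 := by
        match a1, a2 with
        | Op.push, _ => exact absurd (List.mem_cons_self) hp1
        | _, Op.push => exact absurd (List.mem_cons_self) hp2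
        | Op.mu, Op.mu => rfl
        | Op.lam, Op.lam => rfl
        | Op.mu, Op.lam =>
          exact absurd (h2.mpr (h1.mp rfl)) (by simp)
        | Op.lam, Op.mu =>
          exact absurd (h1.mpr (h2.mp rfl)) (by simp)
      subst ha
      congr 1
      -- peel one step
      match a1 with
      | Op.push => exact absurd (List.mem_cons_self) hp1
      | Op.lam =>
        match h with
        | [] => simp [runOps, stepOp] at hr1
        | y :: h' =>
          simp only [runOps, stepOp, Option.bind_some, List.nil_append] at hr1 hr2
          have hnd' : ((y :: v) ++ h').Nodup := by
            refine (List.Perm.nodup_iff ?_).mpr hnd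
            exact (List.perm_middle).symm
          exact ih t2 h' (y :: v) out1 out2 hnd' hp1' hp2' hr1 hs1 hr2 hs2
      | Op.mu =>
        match v with
        | [] => simp [runOps, stepOp] at hr1
        | x :: v' =>
          simp only [runOps, stepOp, Option.bind_some, List.nil_append] at hr1 hr2
          have hnd' : (v' ++ h).Nodup := by
            rw [show (x :: v') ++ h = x :: (v' ++ h) by simp] at hnd
            exact (List.nodup_cons.mp hnd).2
          rw [runShift t1 [] h v' [x]] at hr1
          rw [runShift t2 [] h v' [x]] at hr2
          obtain ⟨c1, hc1, hf1⟩ := Option.map_eq_some_iff.mp hr1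
          obtain ⟨c2, hc2, hf2⟩ := Option.map_eq_some_iff.mp hr2
          obtain ⟨ci1, ch1, cv1, co1⟩ := c1
          obtain ⟨ci2, ch2, cv2, co2⟩ := c2
          simp only [Conf.mk.injEq, List.singleton_append] at hf1 hf2
          obtain ⟨e1, e2, e3, e4⟩ := hf1
          obtain ⟨f1, f2, f3, f4⟩ := hf2
          subst e1; subst e2; subst e3
          subst f1; subst f2; subst f3
          have hs1' : co1.Pairwise (· < ·) := by
            rw [← e4] at hs1; exact (List.pairwise_cons.mp hs1).2
          have hs2' : co2.Pairwise (· < ·) := by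
            rw [← f4] at hs2; exact (List.pairwise_cons.mp hs2).2
          exact ih t2 h v' co1 co2 hnd' hp1' hp2' hc1 hs1' hc2 hs2'

/-- If a stack configuration `c` (with distinct elements) is poppable, then there is
exactly one sequence of operations `λ`, `μ` outputting all its elements in
increasing order. -/
theorem poppable_unique_popping (c : SConf) (hnd : c.elems.Nodup) (hpop : Poppable c) :
    ∃! w : List Op, Op.push ∉ w ∧
      ∃ out : List ℤ, runOps w ⟨[], c.H, c.V, []⟩ = some ⟨[], [], [], out⟩ ∧
        out.Pairwise (· < ·) := by
  obtain ⟨w, out, hpw, hrun, hsort⟩ := hpop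
  refine ⟨w, ⟨hpw, out, hrun, hsort⟩, ?_⟩
  rintro w' ⟨hpw', out', hrun', hsort'⟩
  exact uniqPop w' w c.H c.V out' out (by simpa [SConf.elems] using hnd)
    hpw' hpw hrun' hsort' hrun hsort
end

section
/- For any permutation σ, any stack word (respectively sorting word) w applied to σ, and any set of integers I, the restriction w_{|I} is also a stack word (respectively a sorting word). -/
/-- Count of elements of a stack satisfying `q`. -/
def rcnt (q : ℤ → Bool) (l : List ℤ) : ℕ := (l.filter q).length

/-- Generalized restriction of a decorated word. -/
def rW (dw : List (Op × ℤ)) (q : ℤ → Bool) : List Op :=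
  (dw.filter (fun p => q p.2)).map Prod.fst

lemma countOp_nil (o : Op) : countOp [] o = 0 := rfl

lemma countOp_cons (a : Op) (l : List Op) (o : Op) :
    countOp (a :: l) o = (if a = o then 1 else 0) + countOp l o := by
  simp only [countOp, List.filter_cons]
  split <;> simp_all <;> omega

lemma rW_nil (q : ℤ → Bool) : rW [] q = [] := rfl

lemma rW_cons (p : Op × ℤ) (l : List (Op × ℤ)) (q : ℤ → Bool) :
    rW (p :: l) q = (if q p.2 then [p.1] else []) ++ rW l q := by
  simp [rW, List.filter_cons]; split <;> simp

lemma main_lemma (q : ℤ → Bool) : ∀ (w : List Op) (c : Conf) (dw : List (Op × ℤ)),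
    decorate w c = some dw →
    dw.map Prod.fst = w ∧
    ∃ c', runOps w c = some c' ∧
      countOp (rW dw q) Op.push + rcnt q c.H = countOp (rW dw q) Op.lam + rcnt q c'.H ∧
      countOp (rW dw q) Op.lam + rcnt q c.V = countOp (rW dw q) Op.mu + rcnt q c'.V := by
  intro w
  induction w with
  | nil =>
    intro c dw h
    simp [decorate] at h
    subst h
    exact ⟨rfl, c, rfl, rfl, rfl⟩
  | cons o w ih =>
    intro c dw h
    obtain ⟨inp, h0, v0, out⟩ := c
    cases o with
    | push =>
      cases inp with
      | nil => simp [decorate] at h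
      | cons x inp =>
        simp only [decorate, Option.map_eq_some_iff] at h
        obtain ⟨l, hl, rfl⟩ := h
        obtain ⟨hmap, c', hrun, e1, e2⟩ := ih _ _ hl
        refine ⟨by simp [hmap], c', by simp [runOps, stepOp, hrun], ?_, ?_⟩ <;>
          · simp only [rW_cons]
            split <;>
              (try simp_all [countOp_cons, rcnt, List.filter_cons]) <;> omega
    | lam =>
      cases h0 with
      | nil => simp [decorate] at h
      | cons x h0 =>
        simp only [decorate, Option.map_eq_some_iff] at h
        obtain ⟨l, hl, rfl⟩ := h
        obtain ⟨hmap, c', hrun, e1, e2⟩ := ih _ _ hl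
        refine ⟨by simp [hmap], c', by simp [runOps, stepOp, hrun], ?_, ?_⟩ <;>
          · simp only [rW_cons]
            split <;>
              (try simp_all [countOp_cons, rcnt, List.filter_cons]) <;> omega
    | mu =>
      cases v0 with
      | nil => simp [decorate] at h
      | cons x v0 =>
        simp only [decorate, Option.map_eq_some_iff] at h
        obtain ⟨l, hl, rfl⟩ := h
        obtain ⟨hmap, c', hrun, e1, e2⟩ := ih _ _ hl
        refine ⟨by simp [hmap], c', by simp [runOps, stepOp, hrun], ?_, ?_⟩ <;>
          · simp only [rW_cons]
            split <;>
              (try simp_all [countOp_cons, rcnt, List.filter_cons]) <;> omega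

lemma decorate_take : ∀ (w : List Op) (c : Conf) (dw : List (Op × ℤ)) (k : ℕ),
    decorate w c = some dw → decorate (w.take k) c = some (dw.take k) := by
  intro w
  induction w with
  | nil =>
    intro c dw k h
    simp [decorate] at h
    subst h
    simp [decorate]
  | cons o w ih =>
    intro c dw k h
    cases k with
    | zero => simp [decorate]
    | succ k =>
      obtain ⟨inp, h0, v0, out⟩ := c
      cases o with
      | push =>
        cases inp with
        | nil => simp [decorate] at h
        | cons x inp =>
          simp only [decorate, Option.map_eq_some_iff] at h
          obtain ⟨l, hl, rfl⟩ := h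
          simp only [List.take_succ_cons, decorate, ih _ _ k hl, Option.map_some]
      | lam =>
        cases h0 with
        | nil => simp [decorate] at h
        | cons x h0 =>
          simp only [decorate, Option.map_eq_some_iff] at h
          obtain ⟨l, hl, rfl⟩ := h
          simp only [List.take_succ_cons, decorate, ih _ _ k hl, Option.map_some]
      | mu =>
        cases v0 with
        | nil => simp [decorate] at h
        | cons x v0 =>
          simp only [decorate, Option.map_eq_some_iff] at h
          obtain ⟨l, hl, rfl⟩ := h
          simp only [List.take_succ_cons, decorate, ih _ _ k hl, Option.map_some]

lemma prefix_rW (q : ℤ → Bool) : ∀ (dw : List (Op × ℤ)) (p : List Op),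
    p <+: rW dw q → ∃ k, p = rW (dw.take k) q := by
  intro dw
  induction dw with
  | nil =>
    intro p hp
    rw [rW_nil] at hp
    exact ⟨0, by simpa [rW_nil] using (List.prefix_nil.mp hp)⟩
  | cons a l ih =>
    intro p hp
    rw [rW_cons] at hp
    by_cases hq : q a.2
    · simp only [hq, if_true] at hp
      cases p with
      | nil => exact ⟨0, rfl⟩
      | cons b p =>
        obtain ⟨rfl, hp'⟩ : b = a.1 ∧ p <+: rW l q := by
          obtain ⟨t, ht⟩ := hp
          simp at ht
          exact ⟨ht.1, ⟨t, ht.2⟩⟩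
        obtain ⟨k, rfl⟩ := ih p hp'
        exact ⟨k + 1, by simp [rW_cons, hq]⟩
    · simp only [hq, if_false, List.nil_append] at hp
      obtain ⟨k, rfl⟩ := ih p hp
      exact ⟨k + 1, by simp [rW_cons, hq]⟩

lemma restrictWord_eq_rW (dw : List (Op × ℤ)) (I : Finset ℤ) :
    restrictWord dw I = rW dw (fun x => decide (x ∈ I)) := rfl

lemma rW_true (dw : List (Op × ℤ)) : rW dw (fun _ => true) = dw.map Prod.fst := by
  simp [rW]

/-- For any permutation `σ`, any stack word (resp. sorting word) `w` applied to `σ`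
(with decorated word `dw`), and any set of integers `I`, the restriction `w_{|I}`
is again a stack word (resp. sorting word). -/
theorem restrict_stackWord (σ : List ℤ) (hσ : σ.Nodup) (w : List Op)
    (dw : List (Op × ℤ)) (I : Finset ℤ)
    (hdw : decorate w (initConf σ) = some dw) (hsw : IsStackWord w) :
    IsStackWord (restrictWord dw I) ∧
      (IsSortingWord w → IsSortingWord (restrictWord dw I)) := by
  set q : ℤ → Bool := fun x => decide (x ∈ I) with hqdef
  have hstack : IsStackWord (restrictWord dw I) := by
    intro v hv
    rw [restrictWord_eq_rW] at hv
    obtain ⟨k, rfl⟩ := prefix_rW q dw v hv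
    have hdec : decorate (w.take k) (initConf σ) = some (dw.take k) :=
      decorate_take w _ dw k hdw
    obtain ⟨_, c', _, e1, e2⟩ := main_lemma q (w.take k) _ _ hdec
    simp only [initConf, rcnt, List.filter_nil, List.length_nil, Nat.add_zero] at e1 e2
    omega
  refine ⟨hstack, fun hsort => ?_⟩
  obtain ⟨_, hpl, hlm⟩ := hsort
  -- final configuration
  obtain ⟨hmap, c', hrun, e1, e2⟩ := main_lemma (fun _ => true) w _ _ hdw
  rw [rW_true, hmap] at e1 e2
  simp only [initConf, rcnt, List.filter_nil, List.length_nil, Nat.add_zero,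
    List.filter_true] at e1 e2
  have hH : c'.H = [] := by
    have := e1
    rw [hpl] at this
    exact List.length_eq_zero_iff.mp (by omega)
  have hV : c'.V = [] := by
    have := e2
    rw [hlm] at this
    exact List.length_eq_zero_iff.mp (by omega)
  obtain ⟨_, c'', hrun', f1, f2⟩ := main_lemma q w _ _ hdw
  rw [hrun] at hrun'
  obtain rfl : c' = c'' := by injection hrun'
  rw [hH] at f1
  rw [hV] at f2
  simp only [initConf, rcnt, List.filter_nil, List.length_nil, Nat.add_zero] at f1 f2
  exact ⟨hstack, by rw [restrictWord_eq_rW, ← hqdef]; omega,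
    by rw [restrictWord_eq_rW, ← hqdef]; omega⟩
end

section
/- If σ = ⊖[B_1,…,B_k] is the ⊖-decomposition of σ, then in any poppable stack configuration reachable for σ, for all i < j the elements of B_i lie below the elements of B_j in each of the two stacks. -/
section Aux

local infixl:50 " <+ " => List.Sublist

lemma aboveIn_of_pair_sublist : ∀ {L : List ℤ} {y x : ℤ}, [y, x] <+ L → AboveIn L y x := by
  intro L
  induction L with
  | nil => intro y x h; exact absurd (List.Sublist.length_le h) (by simp)
  | cons z L ih =>
    intro y x h
    cases h with
    | cons _ h' =>
      obtain ⟨a, b, ha, hb, hab, hga, hgb⟩ := ih h'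
      exact ⟨a + 1, b + 1, by simpa using ha, by simpa using hb, by omega, hga, hgb⟩
    | cons_cons _ h' =>
      have hx : x ∈ L := by simpa using h'.subset (by simp)
      obtain ⟨n, hn⟩ := List.mem_iff_get.mp hx
      exact ⟨0, n.1 + 1, by simp, by simpa using n.2, by omega, rfl, by simpa using hn⟩

lemma pair_sublist_total {x y : ℤ} (hne : x ≠ y) :
    ∀ {L : List ℤ}, x ∈ L → y ∈ L → [x, y] <+ L ∨ [y, x] <+ L := by
  intro L
  induction L with
  | nil => simp
  | cons z L ih =>
    intro hx hy
    rcases List.mem_cons.mp hx with rfl | hx'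
    · have hy' : y ∈ L := by
        rcases List.mem_cons.mp hy with h | h
        · exact absurd h.symm hne
        · exact h
      exact Or.inl ((List.singleton_sublist.mpr hy').cons₂ x)
    · rcases List.mem_cons.mp hy with rfl | hy'
      · exact Or.inr ((List.singleton_sublist.mpr hx').cons₂ y)
      · rcases ih hx' hy' with h | h
        · exact Or.inl (h.cons z)
        · exact Or.inr (h.cons z)

lemma sublist_pair_trans {x y : ℤ} :
    ∀ {L σ : List ℤ}, σ.Nodup → L <+ σ → x ∈ L → y ∈ L → [x, y] <+ σ → [x, y] <+ L := by
  intro L σ hnd hsub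
  induction hsub with
  | slnil => intro hx; simp at hx
  | cons a h ih =>
    rename_i l₁ l₂
    intro hx hy hxy
    have hnd' : l₂.Nodup := (List.nodup_cons.mp hnd).2
    have ha : a ∉ l₂ := (List.nodup_cons.mp hnd).1
    cases hxy with
    | cons _ h2 => exact ih hnd' hx hy h2
    | cons_cons _ h2 =>
      exact absurd (h.subset hx) ha
  | cons_cons a h ih =>
    rename_i l₁ l₂
    intro hx hy hxy
    have hnd' : l₂.Nodup := (List.nodup_cons.mp hnd).2
    have ha : a ∉ l₂ := (List.nodup_cons.mp hnd).1
    cases hxy with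
    | cons_cons _ h2 =>
      have hy2 : y ∈ l₂ := by simpa using h2.subset (by simp)
      have hy' : y ∈ l₁ := by
        rcases List.mem_cons.mp hy with rfl | h
        · exact absurd hy2 ha
        · exact h
      exact (List.singleton_sublist.mpr hy').cons₂ _
    | cons _ h2 =>
      have hx2 : x ∈ l₂ := by simpa using h2.subset (by simp)
      have hy2 : y ∈ l₂ := by simpa using h2.subset (by simp)
      have hx' : x ∈ l₁ := by
        rcases List.mem_cons.mp hx with rfl | h
        · exact absurd hx2 ha
        · exact h
      have hy' : y ∈ l₁ := by
        rcases List.mem_cons.mp hy with rfl | h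
        · exact absurd hy2 ha
        · exact h
      exact (ih hnd' hx' hy' h2).cons _

lemma reach_H_inp : ∀ (w : List Op) (c c' : Conf), runOps w c = some c' →
    c'.H.reverse ++ c'.input <+ c.H.reverse ++ c.input := by
  intro w
  induction w with
  | nil =>
    intro c c' h
    cases h
    exact List.Sublist.refl _
  | cons op w ih =>
    intro c c' h
    obtain ⟨inp, H, V, out⟩ := c
    cases op with
    | push =>
      cases inp with
      | nil => simp [runOps, stepOp] at h
      | cons z inp' =>
        simp only [runOps, stepOp, Option.bind_some] at h
        have := ih _ _ h
        simpa [List.append_assoc] using this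
    | lam =>
      cases H with
      | nil => simp [runOps, stepOp] at h
      | cons z H' =>
        simp only [runOps, stepOp, Option.bind_some] at h
        have h1 := ih _ _ h
        refine h1.trans ?_
        simp only [List.reverse_cons, List.append_assoc]
        exact (List.sublist_append_right [z] inp).append_left H'.reverse
    | mu =>
      cases V with
      | nil => simp [runOps, stepOp] at h
      | cons z V' =>
        simp only [runOps, stepOp, Option.bind_some] at h
        exact ih ⟨inp, H, V', out ++ [z]⟩ c' h

lemma pop_run_sublist : ∀ (w : List Op) (h v o out : List ℤ), Op.push ∉ w →
    runOps w ⟨[], h, v, o⟩ = some ⟨[], [], [], out⟩ → ∃ s, out = o ++ s ∧ v <+ s := by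
  intro w
  induction w with
  | nil =>
    intro h v o out _ hr
    simp only [runOps, Option.some_inj] at hr
    obtain ⟨-, hh, hv, ho⟩ := Conf.mk.injEq .. ▸ (congrArg id hr)
    refine ⟨[], by simp [← ho], ?_⟩
    rw [hv]
  | cons op w ih =>
    intro h v o out hnp hr
    cases op with
    | push => exact absurd (by simp) hnp
    | lam =>
      cases h with
      | nil => simp [runOps, stepOp] at hr
      | cons z h' =>
        simp only [runOps, stepOp, Option.bind_some] at hr
        obtain ⟨s, hout, hsub⟩ := ih h' (z :: v) o out (fun hm => hnp (List.mem_cons_of_mem _ hm)) hr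
        exact ⟨s, hout, (List.sublist_cons_self z v).trans hsub⟩
    | mu =>
      cases v with
      | nil => simp [runOps, stepOp] at hr
      | cons z v' =>
        simp only [runOps, stepOp, Option.bind_some] at hr
        obtain ⟨s, hout, hsub⟩ := ih h v' (o ++ [z]) out (fun hm => hnp (List.mem_cons_of_mem _ hm)) hr
        exact ⟨z :: s, by simpa [List.append_assoc] using hout, hsub.cons₂ z⟩


/-- If `σ = ⊖[B_1, …, B_k]`, then in any poppable stack configuration reachable
for `σ`, for all `i < j` the elements of `B_i` lie below the elements of `B_j`
in each of the two stacks. -/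
theorem blocks_oneUponTheOther (σ : List ℤ) (hσ : σ.Nodup) (Bs : List (List ℤ))
    (hdec : IsMinusDecomposition σ Bs) (c : SConf)
    (hreach : Reachable σ c) (hpop : Poppable c) :
    ∀ i j : ℕ, i < j → j < Bs.length →
      ∀ x ∈ Bs.getD i [], ∀ y ∈ Bs.getD j [],
        (x ∈ c.H → y ∈ c.H → AboveIn c.H y x) ∧
        (x ∈ c.V → y ∈ c.V → AboveIn c.V y x) := by
  intro i j hij hjlen x hx y hy
  obtain ⟨⟨hflat, hblne, hpw⟩, -⟩ := hdec
  have hilen : i < Bs.length := hij.trans hjlen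
  have hgetDi : Bs.getD i [] = Bs.get ⟨i, hilen⟩ := by simp [List.getD_eq_getElem?_getD, hilen]
  have hgetDj : Bs.getD j [] = Bs.get ⟨j, hjlen⟩ := by simp [List.getD_eq_getElem?_getD, hjlen]
  have hyx : y < x := by
    have hR := List.pairwise_iff_get.mp hpw ⟨i, hilen⟩ ⟨j, hjlen⟩ hij
    exact hR x (hgetDi ▸ hx) y (hgetDj ▸ hy)
  have hxyne : x ≠ y := ne_of_gt hyx
  -- [x, y] is a sublist of σ
  have hσeq : σ = (Bs.take j).flatten ++ (Bs.drop j).flatten := by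
    rw [hflat, ← List.flatten_append, List.take_append_drop]
  have hxσ : x ∈ (Bs.take j).flatten := by
    refine List.mem_flatten.mpr ⟨Bs.get ⟨i, hilen⟩, ?_, hgetDi ▸ hx⟩
    have hlt : i < (Bs.take j).length := by simp [hilen, hij]
    have : (Bs.take j).get ⟨i, hlt⟩ = Bs.get ⟨i, hilen⟩ := by
      simp [List.get_eq_getElem, List.getElem_take]
    exact this ▸ List.get_mem _ _
  have hyσ : y ∈ (Bs.drop j).flatten := by
    refine List.mem_flatten.mpr ⟨Bs.get ⟨j, hjlen⟩, ?_, hgetDj ▸ hy⟩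
    have hlt : 0 < (Bs.drop j).length := by simp [hjlen]
    have : (Bs.drop j).get ⟨0, hlt⟩ = Bs.get ⟨j, hjlen⟩ := by
      simp [List.get_eq_getElem, List.getElem_drop]
    exact this ▸ List.get_mem _ _
  have hxy_sub : [x, y] <+ σ := by
    rw [hσeq]
    exact (List.singleton_sublist.mpr hxσ).append (List.singleton_sublist.mpr hyσ)
  constructor
  · -- H case
    intro hxH hyH
    obtain ⟨w, -, inp, out, hrun⟩ := hreach
    have h1 : c.H.reverse ++ inp <+ σ := by
      have := reach_H_inp w (initConf σ) ⟨inp, c.H, c.V, out⟩ hrun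
      simpa [initConf] using this
    have hHsub : c.H.reverse <+ σ := (List.sublist_append_left _ _).trans h1
    have h2 : [x, y] <+ c.H.reverse :=
      sublist_pair_trans hσ hHsub (List.mem_reverse.mpr hxH) (List.mem_reverse.mpr hyH) hxy_sub
    have h3 : [y, x] <+ c.H := by simpa using h2.reverse
    exact aboveIn_of_pair_sublist h3
  · -- V case
    intro hxV hyV
    rcases pair_sublist_total hxyne hxV hyV with hbad | hgood
    · exfalso
      obtain ⟨w, out, hnp, hrun, hsort⟩ := hpop
      obtain ⟨s, hout, hVs⟩ := pop_run_sublist w c.H c.V [] out hnp hrun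
      have h4 : [x, y] <+ out := by
        rw [hout]
        simpa using hbad.trans hVs
      have h5 : List.Pairwise (· < ·) [x, y] := List.Pairwise.sublist h4 hsort
      have hlt : x < y := (List.pairwise_cons.mp h5).1 y (by simp)
      exact absurd hlt (not_lt.mpr hyx.le)
    · exact aboveIn_of_pair_sublist hgood

end Aux
end

section
/- Let σ be a 2-stack sortable permutation and w = uv a sorting word for σ such that after performing the operations of u, the elements 1,…,i−1 have been output and the elements i,…,j all lie at the top of the stacks (above every other element remaining in the stacks). Then there exists a sorting word w′ = u u′ u″ for σ in which u′ consists exactly of the operations that move the elements i,…,j from the stacks to the output in increasing order, without moving any other element. -/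
namespace PopTop
open List

lemma runOps_append (a b : List Op) (c : Conf) :
    runOps (a ++ b) c = (runOps a c).bind (runOps b) := by
  induction a generalizing c with
  | nil => simp [runOps]
  | cons o a ih =>
    show runOps (o :: (a ++ b)) c = _
    rw [runOps, runOps]
    cases stepOp o c with
    | none => rfl
    | some c' => simp [ih]

lemma runOps_output_prefix : ∀ (w : List Op) (c c' : Conf),
    runOps w c = some c' → c.output <+: c'.output := by
  intro w
  induction w with
  | nil => intro c c' h; rw [runOps] at h; cases h; exact List.prefix_rfl
  | cons o w ih =>
    rintro ⟨inp, h, v, o'⟩ c' hr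
    rw [runOps] at hr
    rcases o with _ | _ | _
    · rcases inp with _ | ⟨x, inp⟩
      · simp [stepOp] at hr
      · simp only [stepOp, Option.bind_some] at hr
        have := ih _ _ hr; exact this
    · rcases h with _ | ⟨x, h⟩
      · simp [stepOp] at hr
      · simp only [stepOp, Option.bind_some] at hr
        have := ih _ _ hr; exact this
    · rcases v with _ | ⟨x, v⟩
      · simp [stepOp] at hr
      · simp only [stepOp, Option.bind_some] at hr
        have := ih _ _ hr
        exact (List.prefix_append o' [x]).trans this

lemma runOps_perm : ∀ (w : List Op) (c c' : Conf), runOps w c = some c' →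
    (c'.input ++ c'.H ++ c'.V ++ c'.output).Perm (c.input ++ c.H ++ c.V ++ c.output) := by
  intro w
  induction w with
  | nil => intro c c' h; rw [runOps] at h; cases h; exact List.Perm.refl _
  | cons o w ih =>
    rintro ⟨inp, h, v, o'⟩ c' hr
    rw [runOps] at hr
    rcases o with _ | _ | _
    · rcases inp with _ | ⟨x, inp⟩
      · simp [stepOp] at hr
      · simp only [stepOp, Option.bind_some] at hr
        have hp := ih _ _ hr
        refine hp.trans ?_
        simp only [List.cons_append, List.append_assoc]
        exact List.perm_middle
    · rcases h with _ | ⟨x, h⟩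
      · simp [stepOp] at hr
      · simp only [stepOp, Option.bind_some] at hr
        have hp := ih _ _ hr
        refine hp.trans ?_
        simp only [List.cons_append, List.append_assoc]
        exact List.Perm.append_left inp List.perm_middle
    · rcases v with _ | ⟨x, v⟩
      · simp [stepOp] at hr
      · simp only [stepOp, Option.bind_some] at hr
        have hp := ih _ _ hr
        refine hp.trans ?_
        simp only [List.cons_append, List.append_assoc]
        refine List.Perm.append_left inp (List.Perm.append_left h ?_)
        rw [← List.append_assoc]
        exact List.perm_append_singleton x _

lemma runOps_no_push : ∀ (w : List Op), Op.push ∉ w →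
    ∀ (inp h v o inp' h' v' o' : List ℤ),
    runOps w ⟨inp, h, v, o⟩ = some ⟨inp', h', v', o'⟩ →
    inp' = inp ∧ ∀ inp2, runOps w ⟨inp2, h, v, o⟩ = some ⟨inp2, h', v', o'⟩ := by
  intro w
  induction w with
  | nil =>
    intro _ inp h v o inp' h' v' o' hr
    rw [runOps] at hr
    cases hr
    exact ⟨rfl, fun inp2 => rfl⟩
  | cons op w ih =>
    intro hnp inp h v o inp' h' v' o' hr
    have hnp' : Op.push ∉ w := fun hx => hnp (List.mem_cons_of_mem _ hx)
    have hop : op ≠ Op.push := fun hx => hnp (hx ▸ List.mem_cons_self)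
    rw [runOps] at hr
    rcases op with _ | _ | _
    · exact absurd rfl hop
    · rcases h with _ | ⟨x, h⟩
      · simp [stepOp] at hr
      · simp only [stepOp, Option.bind_some] at hr
        obtain ⟨heq, hall⟩ := ih hnp' _ _ _ _ _ _ _ _ hr
        refine ⟨heq, fun inp2 => ?_⟩
        rw [runOps]
        simp only [stepOp, Option.bind_some]
        exact hall inp2
    · rcases v with _ | ⟨x, v⟩
      · simp [stepOp] at hr
      · simp only [stepOp, Option.bind_some] at hr
        obtain ⟨heq, hall⟩ := ih hnp' _ _ _ _ _ _ _ _ hr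
        refine ⟨heq, fun inp2 => ?_⟩
        rw [runOps]
        simp only [stepOp, Option.bind_some]
        exact hall inp2

/-- Elements above `x` in V are all popped before `x`. -/
lemma pop_after : ∀ (w : List Op) (inp h A B o out : List ℤ) (x : ℤ),
    runOps w ⟨inp, h, A ++ x :: B, o⟩ = some ⟨[], [], [], out⟩ →
    ∃ q1 q2, out = o ++ q1 ++ x :: q2 ∧ A <+ q1 := by
  intro w
  induction w with
  | nil =>
    intro inp h A B o out x hr
    simp [runOps] at hr
  | cons op w ih =>
    intro inp h A B o out x hr
    rw [runOps] at hr
    rcases op with _ | _ | _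
    · rcases inp with _ | ⟨y, inp⟩
      · simp [stepOp] at hr
      · simp only [stepOp, Option.bind_some] at hr
        exact ih _ _ _ _ _ _ _ hr
    · rcases h with _ | ⟨y, h⟩
      · simp [stepOp] at hr
      · simp only [stepOp, Option.bind_some] at hr
        have hr' : runOps w ⟨inp, h, (y :: A) ++ x :: B, o⟩ = some ⟨[], [], [], out⟩ := hr
        obtain ⟨q1, q2, hout, hsub⟩ := ih _ _ _ _ _ _ _ hr'
        exact ⟨q1, q2, hout, (List.sublist_cons_self y A).trans hsub⟩
    · rcases A with _ | ⟨a, A⟩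
      · simp only [List.nil_append] at hr
        simp only [stepOp, Option.bind_some] at hr
        have hpre := runOps_output_prefix _ _ _ hr
        simp only at hpre
        obtain ⟨q2, hq2⟩ := hpre
        exact ⟨[], q2, by simp [← hq2], List.nil_sublist _⟩
      · simp only [List.cons_append] at hr
        simp only [stepOp, Option.bind_some] at hr
        obtain ⟨q1, q2, hout, hsub⟩ := ih _ _ _ _ _ _ _ hr
        refine ⟨a :: q1, q2, ?_, hsub.cons₂ a⟩
        rw [hout]; simp

end PopTop
namespace PopTop

lemma blocked (j : ℤ) : ∀ (w : List Op) (inp h rest o qs qb : List ℤ) (b s : ℤ),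
    j < b → s ≤ j → (∀ x ∈ qs, x ≤ j) → (∀ x ∈ qb, j < x) →
    runOps w ⟨inp, h, b :: s :: rest, o⟩ = some ⟨[], [], [], o ++ (qs ++ qb)⟩ → False := by
  intro w inp h rest o qs qb b s hb hs hqs hqb hr
  obtain ⟨q1, q2, hout, hsub⟩ := pop_after w inp h [b] rest o _ s hr
  rw [List.append_assoc] at hout
  have h2 : qs ++ qb = q1 ++ (s :: q2) := List.append_cancel_left hout
  have hbq1 : b ∈ q1 := hsub.subset (by simp)
  rcases List.append_eq_append_iff.mp h2 with ⟨a', h3, h4⟩ | ⟨c', h3, h4⟩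
  · have : s ∈ qb := by rw [h4]; exact List.mem_append.mpr (Or.inr (by simp))
    exact absurd (hqb s this) (by omega)
  · have : b ∈ qs := by rw [h3]; exact List.mem_append.mpr (Or.inl hbq1)
    exact absurd (hqs b this) (by omega)

end PopTop
namespace PopTop
open List

lemma simulate (i j : ℤ) : ∀ (w : List Op) (inp bH sH H2 sV bV V2 o qs qb : List ℤ),
    (∀ x ∈ sH, i ≤ x ∧ x ≤ j) → (∀ x ∈ sV, i ≤ x ∧ x ≤ j) →
    (∀ x ∈ inp, j < x) → (∀ x ∈ bH, j < x) → (∀ x ∈ bV, j < x) →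
    (∀ x ∈ H2, j < x) → (∀ x ∈ V2, j < x) →
    (∀ x ∈ qs, x ≤ j) → (∀ x ∈ qb, j < x) →
    (sH ++ sV).Nodup → (∀ x ∈ sH ++ sV, x ∉ o) →
    (∀ x ∈ o, x ∉ qs ++ qb) → (qs ++ qb).Nodup →
    runOps w ⟨inp, bH ++ (sH ++ H2), sV ++ (bV ++ V2), o⟩ = some ⟨[], [], [], o ++ (qs ++ qb)⟩ →
    ∃ ws wb : List Op, Op.push ∉ ws ∧
      runOps ws ⟨inp, sH ++ H2, sV ++ V2, o⟩ = some ⟨inp, H2, V2, o ++ qs⟩ ∧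
      runOps wb ⟨inp, bH ++ H2, bV ++ V2, o ++ qs⟩ = some ⟨[], [], [], o ++ (qs ++ qb)⟩ := by
  intro w
  induction w with
  | nil =>
    intro inp bH sH H2 sV bV V2 o qs qb hsH hsV hinp hbH hbV hH2 hV2 hqs hqb hnds hsno hdisj hndq hr
    rw [runOps] at hr
    simp only [Option.some.injEq, Conf.mk.injEq, List.append_eq_nil_iff, List.self_eq_append_right] at hr
    obtain ⟨h1, ⟨h2, h3, h4⟩, ⟨h5, h6, h7⟩, h9, h10⟩ := hr
    subst h1 h2 h3 h4 h5 h6 h7 h9 h10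
    exact ⟨[], [], by simp, by simp [runOps], by simp [runOps]⟩
  | cons op w' ih =>
    intro inp bH sH H2 sV bV V2 o qs qb hsH hsV hinp hbH hbV hH2 hV2 hqs hqb hnds hsno hdisj hndq hr
    have hr0 := hr
    by_cases hboth : sH = [] ∧ sV = []
    · obtain ⟨e1, e2⟩ := hboth
      subst e1 e2
      have hqsnil : qs = [] := by
        rcases qs with _ | ⟨t, qs'⟩
        · rfl
        · exfalso
          have hperm := runOps_perm (op :: w') _ _ hr0
          simp only at hperm
          have ht : t ∈ ([] : List ℤ) ++ [] ++ [] ++ (o ++ ((t :: qs') ++ qb)) := by simp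
          have ht2 := hperm.subset ht
          simp only [List.mem_append, List.nil_append, List.mem_cons] at ht2 ⊢
          have htj : t ≤ j := hqs t (by simp)
          rcases ht2 with ((h1 | h1 | h1) | h1 | h1) | h1
          · exact absurd (hinp t h1) (by omega)
          · exact absurd (hbH t h1) (by omega)
          · exact absurd (hH2 t h1) (by omega)
          · exact absurd (hbV t h1) (by omega)
          · exact absurd (hV2 t h1) (by omega)
          · exact hdisj t h1 (by simp)
      subst hqsnil
      refine ⟨[], op :: w', by simp, by simp [runOps], ?_⟩
      simpa using hr0
    · rw [runOps] at hr
      rcases op with _ | _ | _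
      -- push
      · rcases inp with _ | ⟨x, inp'⟩
        · simp [stepOp] at hr
        · simp only [stepOp, Option.bind_some] at hr
          have hbH' : ∀ x' ∈ x :: bH, j < x' := by
            intro x' hx'
            rcases List.mem_cons.mp hx' with h1 | h1
            · exact h1 ▸ hinp x (by simp)
            · exact hbH x' h1
          obtain ⟨ws, wb, hwsp, hws, hwb⟩ := ih inp' (x :: bH) sH H2 sV bV V2 o qs qb
            hsH hsV (fun y hy => hinp y (by simp [hy])) hbH' hbV hH2 hV2 hqs hqb hnds hsno hdisj hndq hr
          obtain ⟨-, hall⟩ := runOps_no_push ws hwsp _ _ _ _ _ _ _ _ hws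
          refine ⟨ws, Op.push :: wb, hwsp, hall (x :: inp'), ?_⟩
          rw [runOps]
          simp only [stepOp, Option.bind_some]
          exact hwb
      -- lam
      · rcases bH with _ | ⟨b, bH'⟩
        · rcases sH with _ | ⟨s, sH'⟩
          · rcases sV with _ | ⟨s, sV'⟩
            · exact absurd ⟨rfl, rfl⟩ hboth
            · rcases H2 with _ | ⟨x, H2'⟩
              · simp [stepOp] at hr
              · simp only [List.nil_append, List.cons_append, stepOp, Option.bind_some] at hr
                exact absurd hr (by
                  intro hcon
                  exact blocked j w' _ _ _ _ _ _ _ _ (hH2 x (by simp)) (hsV s (by simp)).2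
                    hqs hqb hcon)
          · simp only [List.nil_append, List.cons_append, stepOp, Option.bind_some] at hr
            have hnds' : (sH' ++ (s :: sV)).Nodup := by
              have hp : (s :: (sH' ++ sV)).Perm (sH' ++ (s :: sV)) := List.perm_middle.symm
              exact hp.nodup hnds
            have hsno' : ∀ x ∈ sH' ++ (s :: sV), x ∉ o := by
              intro x hx
              apply hsno x
              have : x ∈ s :: (sH' ++ sV) := (List.perm_middle.symm.mem_iff).mpr hx
              simpa using this
            obtain ⟨ws, wb, hwsp, hws, hwb⟩ := ih inp [] sH' H2 (s :: sV) bV V2 o qs qb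
              (fun y hy => hsH y (by simp [hy]))
              (fun y hy => by
                rcases List.mem_cons.mp hy with h1 | h1
                · exact h1 ▸ hsH s (by simp)
                · exact hsV y h1)
              hinp (by simp) hbV hH2 hV2 hqs hqb hnds' hsno' hdisj hndq hr
            refine ⟨Op.lam :: ws, wb, by simp [hwsp], ?_, hwb⟩
            rw [runOps]
            simp only [List.cons_append, stepOp, Option.bind_some]
            exact hws
        · rcases sV with _ | ⟨s, sV'⟩
          · simp only [List.cons_append, stepOp, Option.bind_some, List.nil_append] at hr
            obtain ⟨ws, wb, hwsp, hws, hwb⟩ := ih inp bH' sH H2 [] (b :: bV) V2 o qs qb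
              hsH (by simp) hinp (fun y hy => hbH y (by simp [hy]))
              (fun y hy => by
                rcases List.mem_cons.mp hy with h1 | h1
                · exact h1 ▸ hbH b (by simp)
                · exact hbV y h1)
              hH2 hV2 hqs hqb hnds hsno hdisj hndq hr
            refine ⟨ws, Op.lam :: wb, hwsp, hws, ?_⟩
            rw [runOps]
            simp only [List.cons_append, stepOp, Option.bind_some]
            exact hwb
          · simp only [List.cons_append, stepOp, Option.bind_some] at hr
            exact absurd hr (by
              intro hcon
              exact blocked j w' _ _ _ _ _ _ _ _ (hbH b (by simp)) (hsV s (by simp)).2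
                hqs hqb hcon)
      -- mu
      · rcases sV with _ | ⟨s, sV'⟩
        · rcases hv : bV ++ V2 with _ | ⟨c, rest⟩
          · rw [List.nil_append, hv] at hr
            simp [stepOp] at hr
          · rw [List.nil_append, hv] at hr
            simp only [stepOp, Option.bind_some] at hr
            exfalso
            have hcbig : j < c := by
              have : c ∈ bV ++ V2 := by rw [hv]; simp
              rcases List.mem_append.mp this with h1 | h1
              · exact hbV c h1
              · exact hV2 c h1
            have hqsnil : qs = [] := by
              rcases qs with _ | ⟨t, qs'⟩
              · rfl
              · exfalso
                have hpre := runOps_output_prefix _ _ _ hr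
                simp only at hpre
                obtain ⟨tt, htt⟩ := hpre
                rw [List.append_assoc] at htt
                have h2 : [c] ++ tt = (t :: qs') ++ qb := List.append_cancel_left htt
                have : t = c := by
                  have := h2.symm
                  simp only [List.cons_append, List.singleton_append, List.cons.injEq] at this
                  exact this.1
                have := hqs t (by simp)
                omega
            subst hqsnil
            rcases sH with _ | ⟨s, sH'⟩
            · exact hboth ⟨rfl, rfl⟩
            · have hperm := runOps_perm (Op.mu :: w') _ _ hr0
              simp only at hperm
              have hs : s ∈ ([] : List ℤ) ++ [] ++ [] ++ (o ++ ([] ++ qb)) := by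
                apply hperm.symm.subset
                simp
              simp only [List.nil_append, List.mem_append] at hs
              rcases hs with h1 | h1
              · exact hsno s (by simp) h1
              · exact absurd (hqb s h1) (by have := (hsH s (by simp)).2; omega)
        · simp only [List.cons_append, stepOp, Option.bind_some] at hr
          -- the popped element is s; qs = s :: qs'
          have hpre := runOps_output_prefix _ _ _ hr
          simp only at hpre
          obtain ⟨tt, htt⟩ := hpre
          rw [List.append_assoc] at htt
          have h2 : [s] ++ tt = qs ++ qb := List.append_cancel_left htt
          rcases qs with _ | ⟨t, qs'⟩
          · exfalso
            have : s ∈ qb := by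
              have h3 : qb = s :: tt := by simpa using h2.symm
              rw [h3]; simp
            exact absurd (hqb s this) (by have := (hsV s (by simp)).2; omega)
          · have hts : t = s := by
              have := h2.symm
              simp only [List.cons_append, List.singleton_append, List.cons.injEq] at this
              exact this.1
            subst hts
            have hsnotin : t ∉ sH ++ sV' := by
              have hp : (sH ++ (t :: sV')).Perm (t :: (sH ++ sV')) := List.perm_middle
              have := hp.nodup hnds
              exact (List.nodup_cons.mp this).1
            have htnotq : t ∉ qs' ++ qb := by
              have : ((t :: qs') ++ qb).Nodup := hndq
              rw [List.cons_append] at this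
              exact (List.nodup_cons.mp this).1
            have hr' : runOps w' ⟨inp, bH ++ (sH ++ H2), sV' ++ (bV ++ V2), o ++ [t]⟩ =
                some ⟨[], [], [], (o ++ [t]) ++ (qs' ++ qb)⟩ := by
              rw [show (o ++ [t]) ++ (qs' ++ qb) = o ++ ((t :: qs') ++ qb) by simp]
              exact hr
            obtain ⟨ws, wb, hwsp, hws, hwb⟩ := ih inp bH sH H2 sV' bV V2 (o ++ [t]) qs' qb
              hsH (fun y hy => hsV y (by simp [hy])) hinp hbH hbV hH2 hV2
              (fun y hy => hqs y (by simp [hy])) hqb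
              (by
                have hsub : (sH ++ sV') <+ (sH ++ (t :: sV')) :=
                  List.Sublist.append_left (List.sublist_cons_self t sV') sH
                exact hnds.sublist hsub)
              (by
                intro x hx
                simp only [List.mem_append, List.mem_singleton]
                rintro (h1 | h1)
                · exact hsno x (by
                    rcases List.mem_append.mp hx with h2 | h2
                    · exact List.mem_append.mpr (Or.inl h2)
                    · exact List.mem_append.mpr (Or.inr (by simp [h2]))) h1
                · exact hsnotin (h1 ▸ hx))
              (by
                intro x hx
                rcases List.mem_append.mp hx with h1 | h1
                · intro hcon
                  exact hdisj x h1 (by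
                    rcases List.mem_append.mp hcon with h2 | h2
                    · exact List.mem_append.mpr (Or.inl (by simp [h2]))
                    · exact List.mem_append.mpr (Or.inr h2))
                · rw [List.mem_singleton] at h1
                  exact h1 ▸ htnotq)
              (by
                have : ((t :: qs') ++ qb).Nodup := hndq
                rw [List.cons_append] at this
                exact (List.nodup_cons.mp this).2)
              hr'
            refine ⟨Op.mu :: ws, wb, by simp [hwsp], ?_, ?_⟩
            · rw [runOps]
              simp only [List.cons_append, stepOp, Option.bind_some]
              rw [show o ++ (t :: qs') = (o ++ [t]) ++ qs' by simp]
              exact hws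
            · rw [show o ++ ((t :: qs') ++ qb) = (o ++ [t]) ++ (qs' ++ qb) by simp,
                show o ++ (t :: qs') = (o ++ [t]) ++ qs' by simp]
              exact hwb

end PopTop
namespace PopTop
open List

lemma split_le (j : ℤ) : ∀ (q : List ℤ), q.Pairwise (· < ·) →
    ∃ qs qb : List ℤ, q = qs ++ qb ∧ (∀ x ∈ qs, x ≤ j) ∧ (∀ x ∈ qb, j < x) := by
  intro q
  induction q with
  | nil => exact fun _ => ⟨[], [], rfl, by simp, by simp⟩
  | cons a q ih =>
    intro hs
    obtain ⟨hrel, hs'⟩ := List.pairwise_cons.mp hs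
    by_cases ha : a ≤ j
    · obtain ⟨qs, qb, h1, h2, h3⟩ := ih hs'
      refine ⟨a :: qs, qb, by rw [h1, List.cons_append], ?_, h3⟩
      intro x hx
      rcases List.mem_cons.mp hx with h | h
      · omega
      · exact h2 x h
    · refine ⟨[], a :: q, rfl, by simp, ?_⟩
      intro x hx
      rcases List.mem_cons.mp hx with h | h
      · omega
      · have := hrel x h; omega

lemma coe_range_eq (n : ℕ) :
    (do let a ← List.range n; pure ((a:ℤ)) : List ℤ) = (List.range n).map (fun a : ℕ => (a:ℤ)) := by
  simp only [List.bind_eq_flatMap, List.pure_def]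
  induction n with
  | zero => rfl
  | succ n ih => rw [List.range_succ]; simp [List.flatMap_append, ih]

lemma intRange_eq (i j : ℤ) :
    intRange i j = (List.range (j + 1 - i).toNat).map (fun t : ℕ => i + (t:ℤ)) := by
  show List.map (fun t => i + t) (do let a ← List.range ((j+1-i).toNat); pure ((a:ℤ))) = _
  rw [coe_range_eq, List.map_map]
  rfl

lemma mem_intRange (i j x : ℤ) : x ∈ intRange i j ↔ i ≤ x ∧ x ≤ j := by
  rw [intRange_eq]
  simp only [List.mem_map, List.mem_range]
  constructor
  · rintro ⟨t, ht, rfl⟩; omega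
  · rintro ⟨h1, h2⟩; exact ⟨(x - i).toNat, by omega, by omega⟩

lemma intRange_sorted (i j : ℤ) : (intRange i j).Pairwise (· < ·) := by
  rw [intRange_eq]
  refine List.Pairwise.map _ ?_ List.pairwise_lt_range
  intro a b hab
  omega

end PopTop
/-- If after performing `u` the elements smaller than `i` have been output and the
elements of `[i..j]` all lie at the top of the stacks, then the sorting word
`u ++ v` can be transformed into a sorting word `u ++ u' ++ u''` where `u'` pops
exactly the elements `i, …, j` in increasing order, moving no other element. -/
theorem pop_top_interval (σ : List ℤ) (hσ : σ.Nodup) (u v : List Op)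
    (hsort : SortsTo σ (u ++ v)) (i j : ℤ) (hij : i ≤ j)
    (inp H V out : List ℤ)
    (hrun : runOps u (initConf σ) = some ⟨inp, H, V, out⟩)
    (hout : ∀ x : ℤ, x ∈ out ↔ (x ∈ σ ∧ x < i))
    (hall : ∀ x : ℤ, i ≤ x → x ≤ j → x ∈ σ)
    (H1 H2 V1 V2 : List ℤ)
    (hH : H = H1 ++ H2) (hV : V = V1 ++ V2)
    (hH1 : ∀ x ∈ H1, i ≤ x ∧ x ≤ j) (hH2 : ∀ x ∈ H2, ¬ (i ≤ x ∧ x ≤ j))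
    (hV1 : ∀ x ∈ V1, i ≤ x ∧ x ≤ j) (hV2 : ∀ x ∈ V2, ¬ (i ≤ x ∧ x ≤ j))
    (htop : ∀ x : ℤ, i ≤ x → x ≤ j → (x ∈ H ∨ x ∈ V)) :
    ∃ u' u'' : List Op, SortsTo σ (u ++ u' ++ u'') ∧ Op.push ∉ u' ∧
      runOps u' ⟨inp, H, V, out⟩ = some ⟨inp, H2, V2, out ++ intRange i j⟩ := by
  classical
  obtain ⟨outF, hrunF, hsorted, hpermF⟩ := hsort
  rw [PopTop.runOps_append, hrun, Option.bind_some] at hrunF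
  have hv := hrunF
  have hw : (inp ++ H ++ V ++ out).Perm σ := by
    have := PopTop.runOps_perm u _ _ hrun
    simpa [initConf] using this
  have hwnd : (inp ++ H ++ V ++ out).Nodup := hw.symm.nodup hσ
  have hwnd' : (inp ++ (H ++ (V ++ out))).Nodup := by
    simpa [List.append_assoc] using hwnd
  obtain ⟨hnd_inp, hnd1, hd1⟩ := List.nodup_append.mp hwnd'
  obtain ⟨hnd_H, hnd2, hd2⟩ := List.nodup_append.mp hnd1
  obtain ⟨hnd_V, hnd_out, hd3⟩ := List.nodup_append.mp hnd2
  have hmemσ : ∀ x : ℤ, x ∈ inp ∨ x ∈ H ∨ x ∈ V ∨ x ∈ out → x ∈ σ := by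
    intro x hx
    apply hw.subset
    simp only [List.mem_append]
    tauto
  have hge : ∀ x : ℤ, x ∈ inp ∨ x ∈ H ∨ x ∈ V → i ≤ x := by
    intro x hx
    by_contra hlt
    push_neg at hlt
    have hxσ : x ∈ σ := hmemσ x (by tauto)
    have hxout : x ∈ out := (hout x).mpr ⟨hxσ, hlt⟩
    rcases hx with h | h | h
    · exact hd1 _ h _ (List.mem_append.mpr (Or.inr (List.mem_append.mpr (Or.inr hxout)))) rfl
    · exact hd2 _ h _ (List.mem_append.mpr (Or.inr hxout)) rfl
    · exact hd3 _ h _ hxout rfl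
  have hinp_big : ∀ x ∈ inp, j < x := by
    intro x hx
    by_contra hle
    push_neg at hle
    have hxi : i ≤ x := hge x (Or.inl hx)
    rcases htop x hxi hle with h | h
    · exact hd1 _ hx _ (List.mem_append.mpr (Or.inl h)) rfl
    · exact hd1 _ hx _ (List.mem_append.mpr (Or.inr (List.mem_append.mpr (Or.inl h)))) rfl
  have hH2big : ∀ x ∈ H2, j < x := by
    intro x hx
    have hxH : x ∈ H := by rw [hH]; exact List.mem_append.mpr (Or.inr hx)
    have hxi : i ≤ x := hge x (Or.inr (Or.inl hxH))
    have := hH2 x hx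
    by_contra hcon
    push_neg at hcon
    exact this ⟨hxi, hcon⟩
  have hV2big : ∀ x ∈ V2, j < x := by
    intro x hx
    have hxV : x ∈ V := by rw [hV]; exact List.mem_append.mpr (Or.inr hx)
    have hxi : i ≤ x := hge x (Or.inr (Or.inr hxV))
    have := hV2 x hx
    by_contra hcon
    push_neg at hcon
    exact this ⟨hxi, hcon⟩
  obtain ⟨q, hq⟩ := PopTop.runOps_output_prefix v _ _ hv
  simp only at hq
  have houtFnd : outF.Nodup := hpermF.symm.nodup hσ
  have houtqnd : (out ++ q).Nodup := by rw [hq]; exact houtFnd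
  obtain ⟨hnd_out2, hqnd, hdisjq⟩ := List.nodup_append.mp houtqnd
  have hqsort : q.Pairwise (· < ·) := by
    have hsub : q.Sublist outF := by
      rw [← hq]; exact List.sublist_append_right out q
    exact List.Pairwise.sublist hsub hsorted
  obtain ⟨qs, qb, hsplit, hqsle, hqbgt⟩ := PopTop.split_le j q hqsort
  have hvperm := PopTop.runOps_perm v _ _ hv
  simp only at hvperm
  have hvmem : ∀ x : ℤ, x ∈ inp ∨ x ∈ H ∨ x ∈ V ∨ x ∈ out → x ∈ outF := by
    intro x hx
    have : x ∈ inp ++ H ++ V ++ out := by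
      simp only [List.mem_append]; tauto
    have := hvperm.symm.subset this
    simpa using this
  have houtFeq : outF = out ++ (qs ++ qb) := by rw [← hsplit, hq]
  have hnds : (H1 ++ V1).Nodup := by
    have hndHV : (H ++ V).Nodup := by
      refine List.Nodup.sublist ?_ hwnd'
      refine List.Sublist.trans ?_ (List.sublist_append_right inp _)
      exact List.Sublist.append_left (List.sublist_append_left V out) H
    refine List.Nodup.sublist ?_ hndHV
    rw [hH, hV]
    exact List.Sublist.append (List.sublist_append_left H1 H2) (List.sublist_append_left V1 V2)
  have hsno : ∀ x ∈ H1 ++ V1, x ∉ out := by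
    intro x hx
    rcases List.mem_append.mp hx with h | h
    · intro hcon
      exact hd2 _ (by rw [hH]; exact List.mem_append.mpr (Or.inl h))
        _ (List.mem_append.mpr (Or.inr hcon)) rfl
    · intro hcon
      exact hd3 _ (by rw [hV]; exact List.mem_append.mpr (Or.inl h)) _ hcon rfl
  have hdisj2 : ∀ x ∈ out, x ∉ qs ++ qb := by
    intro x hx
    rw [← hsplit]
    exact fun hc => hdisjq _ hx _ hc rfl
  have hndq2 : (qs ++ qb).Nodup := by rw [← hsplit]; exact hqnd
  have hv' : runOps v ⟨inp, [] ++ (H1 ++ H2), V1 ++ ([] ++ V2), out⟩ =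
      some ⟨[], [], [], out ++ (qs ++ qb)⟩ := by
    simp only [List.nil_append]
    rw [← hH, ← hV, ← houtFeq]
    exact hv
  obtain ⟨ws, wb, hwsp, hws, hwb⟩ := PopTop.simulate i j v inp [] H1 H2 V1 [] V2 out qs qb
    hH1 hV1 hinp_big (by simp) (by simp) hH2big hV2big hqsle hqbgt hnds hsno hdisj2 hndq2 hv'
  -- qs = intRange i j
  have hqselem : ∀ x : ℤ, x ∈ qs ↔ x ∈ intRange i j := by
    intro x
    rw [PopTop.mem_intRange]
    constructor
    · intro hx
      refine ⟨?_, hqsle x hx⟩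
      have hxq : x ∈ q := by rw [hsplit]; exact List.mem_append.mpr (Or.inl hx)
      have hxout : x ∉ out := fun hcon => hdisjq _ hcon _ hxq rfl
      have hxσ : x ∈ σ := hpermF.subset (by rw [← hq]; exact List.mem_append.mpr (Or.inr hxq))
      by_contra hlt
      push_neg at hlt
      exact hxout ((hout x).mpr ⟨hxσ, hlt⟩)
    · rintro ⟨h1, h2⟩
      have hxH1V1 : x ∈ H1 ∨ x ∈ V1 := by
        rcases htop x h1 h2 with h | h
        · rw [hH] at h
          rcases List.mem_append.mp h with h' | h'
          · exact Or.inl h'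
          · exact absurd ⟨h1, h2⟩ (hH2 x h')
        · rw [hV] at h
          rcases List.mem_append.mp h with h' | h'
          · exact Or.inr h'
          · exact absurd ⟨h1, h2⟩ (hV2 x h')
      have hxoutF : x ∈ outF := by
        apply hvmem
        rcases hxH1V1 with h | h
        · exact Or.inr (Or.inl (by rw [hH]; exact List.mem_append.mpr (Or.inl h)))
        · exact Or.inr (Or.inr (Or.inl (by rw [hV]; exact List.mem_append.mpr (Or.inl h))))
      have hxout : x ∉ out := hsno x (List.mem_append.mpr hxH1V1)
      have hxq : x ∈ q := by
        rw [← hq] at hxoutF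
        rcases List.mem_append.mp hxoutF with h | h
        · exact absurd h hxout
        · exact h
      rw [hsplit] at hxq
      rcases List.mem_append.mp hxq with h | h
      · exact h
      · exact absurd (hqbgt x h) (by omega)
  have hqseq : qs = intRange i j := by
    haveI : Std.Antisymm (α := ℤ) (· < ·) := ⟨fun a b h1 h2 => absurd h1 (by omega)⟩
    have hqssorted : qs.Pairwise (· < ·) := by
      have : qs.Sublist q := by rw [hsplit]; exact List.sublist_append_left qs qb
      exact List.Pairwise.sublist this hqsort
    have hqsnd : qs.Nodup := List.Nodup.sublist (List.sublist_append_left _ _) hndq2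
    have hirnd : (intRange i j).Nodup :=
      (PopTop.intRange_sorted i j).imp (fun h => ne_of_lt h)
    refine List.Perm.eq_of_pairwise' hqssorted (PopTop.intRange_sorted i j) ?_
    exact (List.perm_ext_iff_of_nodup hqsnd hirnd).mpr hqselem
  refine ⟨ws, wb, ?_, hwsp, ?_⟩
  · refine ⟨outF, ?_, hsorted, hpermF⟩
    have hws' : runOps ws ⟨inp, H, V, out⟩ = some ⟨inp, H2, V2, out ++ qs⟩ := by
      rw [hH, hV]; exact hws
    rw [PopTop.runOps_append, PopTop.runOps_append, hrun]
    simp only [Option.bind_some]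
    rw [hws']
    simp only [Option.bind_some]
    rw [houtFeq]
    exact hwb
  · rw [hH, hV, ← hqseq]
    exact hws
end

section
/- For any index i and any j < min(p^{(i)}, q^{(i+1)}), the blocks B_j^{(i)} and B_j^{(i+1)} of the ⊖-decompositions of σ^{(i)} and σ^{(i+1)} are equal. -/
namespace BlocksAux
open List

lemma mem_flatten_take {Bs : List (List ℤ)} {n : ℕ} {x : ℤ} (h : x ∈ (Bs.take n).flatten) :
    ∃ j, j < n ∧ j < Bs.length ∧ x ∈ Bs.getD j [] := by
  rw [mem_flatten] at h
  obtain ⟨B, hB, hxB⟩ := h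
  rw [mem_iff_get] at hB
  obtain ⟨⟨j, hj⟩, rfl⟩ := hB
  simp only [length_take, lt_min_iff] at hj
  refine ⟨j, hj.1, hj.2, ?_⟩
  rw [getD_eq_getElem _ _ hj.2]
  simpa [List.get_eq_getElem, getElem_take] using hxB

lemma mem_flatten_drop {Bs : List (List ℤ)} {n : ℕ} {x : ℤ} (h : x ∈ (Bs.drop n).flatten) :
    ∃ j, n ≤ j ∧ j < Bs.length ∧ x ∈ Bs.getD j [] := by
  rw [mem_flatten] at h
  obtain ⟨B, hB, hxB⟩ := h
  rw [mem_iff_get] at hB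
  obtain ⟨⟨j, hj⟩, rfl⟩ := hB
  rw [length_drop] at hj
  have hj' : n + j < Bs.length := by omega
  refine ⟨n + j, by omega, hj', ?_⟩
  rw [getD_eq_getElem _ _ hj']
  simpa [List.get_eq_getElem, getElem_drop] using hxB

lemma getD_lt_of_pairwise {Bs : List (List ℤ)}
    (hpw : Bs.Pairwise (fun B B' => ∀ x ∈ B, ∀ y ∈ B', y < x))
    {a b : ℕ} (hab : a < b) (hb : b < Bs.length) :
    ∀ x ∈ Bs.getD a [], ∀ y ∈ Bs.getD b [], y < x := by
  have ha : a < Bs.length := hab.trans hb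
  have hpq := pairwise_iff_get.mp hpw ⟨a, ha⟩ ⟨b, hb⟩ hab
  intro x hx y hy
  rw [getD_eq_getElem _ _ ha] at hx; rw [getD_eq_getElem _ _ hb] at hy
  exact hpq x (by simpa using hx) y (by simpa using hy)

lemma flatten_take_prefix (Bs : List (List ℤ)) (n : ℕ) :
    (Bs.take n).flatten <+: Bs.flatten :=
  ⟨(Bs.drop n).flatten, by rw [← flatten_append, take_append_drop]⟩

lemma drop_flatten_eq (Bs : List (List ℤ)) (n : ℕ) :
    Bs.flatten.drop ((Bs.take n).flatten).length = (Bs.drop n).flatten := by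
  rw [show Bs.flatten = (Bs.take n).flatten ++ (Bs.drop n).flatten from by
    rw [← flatten_append, take_append_drop], drop_left]

lemma head_ne_aux {A B B' : List ℤ} (hB : B <+: A) (hB' : B' <+: A)
    (hiB' : MinusIndecomposable B')
    (hlt : ∀ x ∈ B, ∀ y ∈ A.drop B.length, y < x)
    (hBne : B ≠ []) (hlen : B.length < B'.length) : False := by
  obtain ⟨R, hR⟩ := prefix_of_prefix_length_le hB hB' hlen.le
  have hRne : R ≠ [] := by
    rintro rfl
    rw [← hR] at hlen; simp at hlen
  have hRsub : ∀ y ∈ R, y ∈ A.drop B.length := by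
    intro y hy
    obtain ⟨t, ht⟩ := hB'
    have hA : A = B ++ (R ++ t) := by rw [← ht, ← hR, append_assoc]
    rw [hA, drop_left]
    simp [hy]
  have hdec : IsDecBlocks B' [B, R] := by
    refine ⟨by simp [← hR], ?_, ?_⟩
    · intro X hX
      simp only [mem_cons, not_mem_nil, or_false] at hX
      rcases hX with rfl | rfl
      · exact hBne
      · exact hRne
    · refine pairwise_cons.mpr ⟨?_, by simp⟩
      intro R' hR' x hx y hy
      simp only [mem_cons, not_mem_nil, or_false] at hR'
      subst hR'
      exact hlt x hx y (hRsub y hy)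
  have h2 := hiB'.2 [B, R] hdec
  simp at h2

lemma head_eq_aux {A B B' : List ℤ} (hB : B <+: A) (hB' : B' <+: A)
    (hiB : MinusIndecomposable B) (hiB' : MinusIndecomposable B')
    (hlt : ∀ x ∈ B, ∀ y ∈ A.drop B.length, y < x)
    (hlt' : ∀ x ∈ B', ∀ y ∈ A.drop B'.length, y < x) : B = B' := by
  rcases lt_trichotomy B.length B'.length with h | h | h
  · exact absurd (head_ne_aux hB hB' hiB' hlt hiB.1 h) (by simp)
  · exact (prefix_of_prefix_length_le hB hB' h.le).eq_of_length h
  · exact absurd (head_ne_aux hB' hB hiB hlt' hiB'.1 h) (by simp)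

lemma blocks_pref_eq : ∀ (Cs Ds : List (List ℤ)) (A : List ℤ),
    Cs.flatten <+: A → Ds.flatten <+: A →
    (∀ B ∈ Cs, MinusIndecomposable B) → (∀ B ∈ Ds, MinusIndecomposable B) →
    (∀ j, j < Cs.length → ∀ x ∈ Cs.getD j [], ∀ y ∈ A.drop ((Cs.take (j+1)).flatten).length, y < x) →
    (∀ j, j < Ds.length → ∀ x ∈ Ds.getD j [], ∀ y ∈ A.drop ((Ds.take (j+1)).flatten).length, y < x) →
    ∀ j, j < min Cs.length Ds.length → Cs.getD j [] = Ds.getD j []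
  | [], Ds, A, _, _, _, _, _, _ => by intro j hj; simp at hj
  | B :: Cs, [], A, _, _, _, _, _, _ => by intro j hj; simp at hj
  | B :: Cs, B' :: Ds, A, hpC, hpD, hiC, hiD, hlC, hlD => by
    have hBA : B <+: A := ((prefix_append B Cs.flatten).trans (by simpa using hpC))
    have hB'A : B' <+: A := ((prefix_append B' Ds.flatten).trans (by simpa using hpD))
    have hltB : ∀ x ∈ B, ∀ y ∈ A.drop B.length, y < x := by
      have := hlC 0 (by simp)
      simpa using this
    have hltB' : ∀ x ∈ B', ∀ y ∈ A.drop B'.length, y < x := by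
      have := hlD 0 (by simp)
      simpa using this
    have hBB' : B = B' :=
      head_eq_aux hBA hB'A (hiC B (by simp)) (hiD B' (by simp)) hltB hltB'
    subst hBB'
    intro j hj
    match j with
    | 0 => rfl
    | j + 1 =>
      have hdropP : ∀ (Es : List (List ℤ)), (B :: Es).flatten <+: A →
          Es.flatten <+: A.drop B.length := by
        intro Es ⟨t, ht⟩
        refine ⟨t, ?_⟩
        rw [← ht, flatten_cons, append_assoc, drop_left]
      have hrec := blocks_pref_eq Cs Ds (A.drop B.length)
        (hdropP Cs hpC) (hdropP Ds hpD)
        (fun X hX => hiC X (by simp [hX])) (fun X hX => hiD X (by simp [hX]))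
        ?_ ?_ j (by simp at hj ⊢; omega)
      · simpa using hrec
      · intro k hk x hx y hy
        have := hlC (k+1) (by simpa using Nat.succ_lt_succ hk) x (by simpa using hx)
        apply this
        rw [drop_drop] at hy
        rw [show ((B :: Cs).take (k + 1 + 1)).flatten.length
            = B.length + ((Cs.take (k+1)).flatten).length by simp]
        convert hy using 2
      · intro k hk x hx y hy
        have := hlD (k+1) (by simpa using Nat.succ_lt_succ hk) x (by simpa using hx)
        apply this
        rw [drop_drop] at hy
        rw [show ((B :: Ds).take (k + 1 + 1)).flatten.length
            = B.length + ((Ds.take (k+1)).flatten).length by simp]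
        convert hy using 2

lemma getD_take' {Bs : List (List ℤ)} {p j : ℕ} (h : j < p) (h2 : j < Bs.length) :
    (Bs.take p).getD j [] = Bs.getD j [] := by
  rw [getD_eq_getElem _ _ (by rw [length_take]; omega), getD_eq_getElem _ _ h2]
  exact getElem_take

lemma getD_mem_drop {Bs : List (List ℤ)} {q : ℕ} (hq : q < Bs.length) :
    Bs.getD q [] ∈ Bs.drop q := by
  rw [getD_eq_getElem _ _ hq]
  have h0 : 0 < (Bs.drop q).length := by rw [length_drop]; omega
  have hmem := getElem_mem (l := Bs.drop q) h0
  rw [getElem_drop] at hmem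
  simpa using hmem

lemma side_cond {A : List ℤ} {Bs : List (List ℤ)} {p : ℕ} (hp : p ≤ Bs.length)
    (hpw : Bs.Pairwise (fun B B' => ∀ x ∈ B, ∀ y ∈ B', y < x))
    (hdrop : ∀ n, n ≤ p → ∀ y ∈ A.drop ((Bs.take n).flatten).length, y ∈ (Bs.drop n).flatten) :
    ∀ j, j < (Bs.take p).length → ∀ x ∈ (Bs.take p).getD j [],
      ∀ y ∈ A.drop ((((Bs.take p).take (j+1))).flatten).length, y < x := by
  intro j hj x hx y hy
  rw [length_take, lt_min_iff] at hj
  rw [getD_take' hj.1 hj.2] at hx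
  rw [take_take, min_eq_left (by omega : j + 1 ≤ p)] at hy
  have hy' := hdrop (j+1) (by omega) y hy
  obtain ⟨j', hj'ge, hj'len, hyj'⟩ := mem_flatten_drop hy'
  exact getD_lt_of_pairwise hpw (by omega : j < j') hj'len x hx y hyj'

lemma filter_flatten_split {Bs : List (List ℤ)} {P : ℤ → Bool} {n : ℕ}
    (h : ∀ x ∈ (Bs.take n).flatten, P x = true) :
    (Bs.flatten).filter P = (Bs.take n).flatten ++ ((Bs.drop n).flatten).filter P := by
  conv_lhs => rw [show Bs.flatten = (Bs.take n).flatten ++ (Bs.drop n).flatten from by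
    rw [← flatten_append, take_append_drop]]
  rw [filter_append, filter_eq_self.mpr h]

end BlocksAux


open BlocksAux in
/-- For any `j < min(p^{(i)}, q^{(i+1)})`, the blocks `B_j^{(i)}` and `B_j^{(i+1)}`
of the `⊖`-decompositions of `σ^{(i)}` and `σ^{(i+1)}` coincide (all indices of
blocks are 0-based here). -/
theorem blocks_eq_below_min (σ : List ℤ) (hσ : σ.Nodup) (i : ℕ)
    (hi : 1 ≤ i) (hir : i + 1 ≤ rtlCount σ)
    (Bs Bs' : List (List ℤ))
    (h1 : IsMinusDecomposition (sigmaUp σ i) Bs)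
    (h2 : IsMinusDecomposition (sigmaUp σ (i + 1)) Bs')
    (m : ℤ) (hm : m ∈ commonA σ i) (hmin : ∀ y ∈ commonA σ i, m ≤ y)
    (p q : ℕ) (hp : p < Bs.length) (hmp : m ∈ Bs.getD p [])
    (hq : q < Bs'.length) (hmq : m ∈ Bs'.getD q []) :
    ∀ j : ℕ, j < min p q → Bs.getD j [] = Bs'.getD j [] := by
  classical
  obtain ⟨⟨hfl1, hne1, hpw1⟩, hind1⟩ := h1
  obtain ⟨⟨hfl2, hne2, hpw2⟩, hind2⟩ := h2
  -- RTL minima positions facts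
  have hlenR : i < (rtlPositions σ).length := by
    unfold rtlCount at hir; omega
  have hlenR' : i - 1 < (rtlPositions σ).length := by omega
  have hk1 : rtlPos σ i = (rtlPositions σ).get ⟨i - 1, hlenR'⟩ := by
    unfold rtlPos; exact List.getD_eq_getElem _ _ hlenR'
  have hk2 : rtlPos σ (i + 1) = (rtlPositions σ).get ⟨i, hlenR⟩ := by
    unfold rtlPos
    rw [show i + 1 - 1 = i from rfl]
    exact List.getD_eq_getElem _ _ hlenR
  have hsorted : (rtlPositions σ).Pairwise (· < ·) :=
    List.pairwise_lt_range.filter _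
  have hk12 : rtlPos σ i < rtlPos σ (i + 1) := by
    rw [hk1, hk2]
    exact List.pairwise_iff_get.mp hsorted ⟨i - 1, hlenR'⟩ ⟨i, hlenR⟩ (by simp; omega)
  have hmemRTL : ∀ k ∈ rtlPositions σ, IsRTLMinPos σ k := by
    intro k hk
    unfold rtlPositions at hk
    exact of_decide_eq_true (List.mem_filter.mp hk).2
  have hrtl1 : IsRTLMinPos σ (rtlPos σ i) :=
    hmemRTL _ (hk1 ▸ List.get_mem _ _)
  have hrtl2 : IsRTLMinPos σ (rtlPos σ (i + 1)) :=
    hmemRTL _ (hk2 ▸ List.get_mem _ _)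
  have hk2len : rtlPos σ (i + 1) < σ.length := hrtl2.1
  have hbc : σ.getD (rtlPos σ i) 0 ≤ σ.getD (rtlPos σ (i + 1)) 0 :=
    le_of_not_gt (hrtl1.2 _ hk2len hk12)
  -- predicates
  set Pc : ℤ → Bool := fun x => decide (σ.getD (rtlPos σ (i + 1)) 0 < x) with hPc
  -- m facts
  have hmA := List.mem_filter.mp hm
  have hcm : σ.getD (rtlPos σ (i + 1)) 0 < m := of_decide_eq_true hmA.2
  -- commonA as filter of sigmaUp i
  have hA_L : commonA σ i = (sigmaUp σ i).filter Pc := by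
    unfold commonA sigmaUp
    rw [List.filter_filter]
    refine (List.filter_congr ?_).symm
    intro x _
    rcases lt_or_ge (σ.getD (rtlPos σ (i + 1)) 0) x with hcx | hcx
    · simp only [hPc]
      rw [decide_eq_true hcx, decide_eq_true (lt_of_le_of_lt hbc hcx)]
      rfl
    · simp only [hPc]
      rw [decide_eq_false (not_lt.mpr hcx)]
      simp
  -- sigmaUp (i+1) = commonA ++ T
  set T : List ℤ := ((σ.take (rtlPos σ (i + 1))).drop (rtlPos σ i)).filter Pc with hT
  have hsplit' : sigmaUp σ (i + 1) = commonA σ i ++ T := by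
    unfold sigmaUp commonA
    conv_lhs => rw [show σ.take (rtlPos σ (i + 1))
        = σ.take (rtlPos σ i) ++ (σ.take (rtlPos σ (i + 1))).drop (rtlPos σ i) from by
      rw [show σ.take (rtlPos σ i) = (σ.take (rtlPos σ (i + 1))).take (rtlPos σ i) from by
        rw [List.take_take, min_eq_left hk12.le], List.take_append_drop]]
    rw [List.filter_append]
  -- Side i : blocks before p are > m hence pass Pc
  have hgt1 : ∀ n, n ≤ p → ∀ x ∈ (Bs.take n).flatten, Pc x = true := by
    intro n hn x hx
    obtain ⟨j, hjn, hjlen, hxj⟩ := mem_flatten_take hx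
    have hmx : m < x := getD_lt_of_pairwise hpw1 (by omega : j < p) hp x hxj m hmp
    simp only [hPc]
    exact decide_eq_true (hcm.trans hmx)
  have hsplit1 : ∀ n, n ≤ p →
      commonA σ i = (Bs.take n).flatten ++ ((Bs.drop n).flatten).filter Pc := by
    intro n hn
    rw [hA_L, hfl1]
    exact filter_flatten_split (hgt1 n hn)
  have hpre1 : (Bs.take p).flatten <+: commonA σ i :=
    ⟨((Bs.drop p).flatten).filter Pc, (hsplit1 p le_rfl).symm⟩
  have hdrop1 : ∀ n, n ≤ p →
      ∀ y ∈ (commonA σ i).drop ((Bs.take n).flatten).length, y ∈ (Bs.drop n).flatten := by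
    intro n hn y hy
    rw [hsplit1 n hn, List.drop_left] at hy
    exact List.mem_of_mem_filter hy
  -- Side i+1
  have hmT : m ∉ T := by
    intro hmem
    have hnd : (σ.take (rtlPos σ (i + 1))).Nodup :=
      (List.take_sublist _ _).nodup hσ
    rw [show σ.take (rtlPos σ (i + 1))
        = σ.take (rtlPos σ i) ++ (σ.take (rtlPos σ (i + 1))).drop (rtlPos σ i) from by
      rw [show σ.take (rtlPos σ i) = (σ.take (rtlPos σ (i + 1))).take (rtlPos σ i) from by
        rw [List.take_take, min_eq_left hk12.le], List.take_append_drop]] at hnd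
    have hdisj := (List.nodup_append'.mp hnd).2.2
    have hmtake : m ∈ σ.take (rtlPos σ i) := List.mem_of_mem_filter hm
    exact hdisj hmtake (List.mem_of_mem_filter hmem)
  have hdq : ((Bs'.take q).flatten).length ≤ (commonA σ i).length := by
    by_contra hcon
    push_neg at hcon
    have hmdrop : m ∈ (sigmaUp σ (i + 1)).drop ((Bs'.take q).flatten).length := by
      rw [hfl2, drop_flatten_eq]
      exact List.mem_flatten.mpr ⟨Bs'.getD q [], getD_mem_drop hq, hmq⟩
    rw [hsplit'] at hmdrop
    rw [show ((Bs'.take q).flatten).length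
        = (commonA σ i).length + (((Bs'.take q).flatten).length - (commonA σ i).length) from by
      omega, List.drop_append] at hmdrop
    rcases List.mem_append.mp hmdrop with h | h
    · exact absurd h (by rw [List.drop_eq_nil_of_le (by omega)]; simp)
    · exact hmT (List.mem_of_mem_drop h)
  have hlen2 : ∀ n, n ≤ q → ((Bs'.take n).flatten).length ≤ (commonA σ i).length := by
    intro n hn
    refine le_trans ?_ hdq
    have : (Bs'.take n).flatten <+: (Bs'.take q).flatten := by
      rw [show Bs'.take n = (Bs'.take q).take n from by
        rw [List.take_take, min_eq_left hn]]
      exact flatten_take_prefix _ n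
    exact this.length_le
  have hAL' : commonA σ i <+: Bs'.flatten := by
    rw [← hfl2]; exact ⟨T, hsplit'.symm⟩
  have hpre2 : (Bs'.take q).flatten <+: commonA σ i :=
    List.prefix_of_prefix_length_le (flatten_take_prefix Bs' q) hAL' hdq
  have hdrop2 : ∀ n, n ≤ q →
      ∀ y ∈ (commonA σ i).drop ((Bs'.take n).flatten).length, y ∈ (Bs'.drop n).flatten := by
    intro n hn y hy
    have hyL' : y ∈ (sigmaUp σ (i + 1)).drop ((Bs'.take n).flatten).length := by
      rw [hsplit', List.drop_append_of_le_length (hlen2 n hn)]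
      exact List.mem_append_left _ hy
    rw [hfl2, drop_flatten_eq] at hyL'
    exact hyL'
  -- apply the uniqueness lemma
  have hmain := blocks_pref_eq (Bs.take p) (Bs'.take q) (commonA σ i)
    hpre1 hpre2
    (fun B hB => hind1 B (List.mem_of_mem_take hB))
    (fun B hB => hind2 B (List.mem_of_mem_take hB))
    (side_cond hp.le hpw1 hdrop1)
    (side_cond hq.le hpw2 hdrop2)
  intro j hj
  have hjp : j < p := by omega
  have hjq : j < q := by omega
  have := hmain j (by rw [List.length_take, List.length_take]; omega)
  rwa [getD_take' hjp (by omega), getD_take' hjq (by omega)] at this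
end
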